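/- arXiv:0908.3750 — 2 statements merged into one kernel-verified Lean document; each statement's English description precedes it below -/
import Mathlib

section
/- Let C be the bivariate margin of a d-dimensional Archimedean copula (so its generator ψ is d-monotone). Then Kendall's tau of C satisfies τ(C) ≥ -1/(2d-3). In particular, for the generator ψ_d^L(x) = (1-x)₊^{d-1}, equality holds: τ = -1/(2d-3). -/
open Set MeasureTheory ProbabilityTheory Filter

noncomputable section

/-- `f` is `d`-monotone on `[0,∞)`: continuous on `[0,∞)`, derivatives up to order `d-2`
exist on `(0,∞)` with `(-1)^k f^(k) ≥ 0`, and `(-1)^(d-2) f^(d-2)` is nonincreasing and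
convex on `(0,∞)`. -/
def DMonotoneOn (d : ℕ) (f : ℝ → ℝ) : Prop :=
  ContinuousOn f (Set.Ici 0) ∧
  (∀ k, k + 2 < d → ∀ x ∈ Set.Ioi (0:ℝ), DifferentiableAt ℝ (iteratedDeriv k f) x) ∧
  (∀ k, k + 2 ≤ d → ∀ x ∈ Set.Ioi (0:ℝ), 0 ≤ (-1:ℝ)^k * iteratedDeriv k f x) ∧
  AntitoneOn (fun x => (-1:ℝ)^(d-2) * iteratedDeriv (d-2) f x) (Set.Ioi 0) ∧
  ConvexOn ℝ (Set.Ioi 0) (fun x => (-1:ℝ)^(d-2) * iteratedDeriv (d-2) f x)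

/-- An Archimedean generator: a continuous nonincreasing function `ψ : [0,∞) → [0,1]`
with `ψ 0 = 1`, `ψ(∞) = 0`, strictly decreasing where it is positive. -/
def IsArchGen (ψ : ℝ → ℝ) : Prop :=
  ContinuousOn ψ (Set.Ici 0) ∧ AntitoneOn ψ (Set.Ici 0) ∧ ψ 0 = 1 ∧
  Filter.Tendsto ψ Filter.atTop (nhds 0) ∧ (∀ x ∈ Set.Ici (0:ℝ), 0 ≤ ψ x ∧ ψ x ≤ 1) ∧
  StrictAntiOn ψ {x | 0 ≤ x ∧ 0 < ψ x}

/-- Generalized inverse of an Archimedean generator, with the convention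
`ψ⁻¹ 0 = inf {x | ψ x = 0}`. -/
def psiInv (ψ : ℝ → ℝ) (u : ℝ) : ℝ := sInf {x | 0 ≤ x ∧ ψ x ≤ u}

namespace Stmt17Aux


lemma integral_pow_kernel (j : ℕ) {t v : ℝ} (_h : t ≤ v) :
    ∫ u in t..v, (v - u)^j = (v - t)^(j+1) / (j+1) := by
  have hne : ((j:ℝ)+1) ≠ 0 := by positivity
  have hder : ∀ u ∈ uIcc t v, HasDerivAt (fun u : ℝ => -((v-u)^(j+1)) / (j+1)) ((v-u)^j) u := by
    intro u _
    have h1 : HasDerivAt (fun u : ℝ => v - u) (-1) u := (hasDerivAt_id u).const_sub v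
    have h2 := (h1.pow (j+1)).neg.div_const ((j:ℝ)+1)
    refine h2.congr_deriv ?_
    push_cast
    field_simp
  have hint : IntervalIntegrable (fun u : ℝ => (v-u)^j) volume t v := by
    apply Continuous.intervalIntegrable; continuity
  rw [intervalIntegral.integral_eq_sub_of_hasDerivAt hder hint]
  simp
  field_simp

lemma integral_t_kernel (n : ℕ) {x : ℝ} (hx : 0 ≤ x) :
    ∫ t in (0:ℝ)..x, t * (x-t)^n = x^(n+2) / (((n:ℝ)+1)*((n:ℝ)+2)) := by
  have hcongr : ∀ t ∈ uIcc (0:ℝ) x, t * (x-t)^n = x * (x-t)^n - (x-t)^(n+1) := by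
    intro t _; ring
  rw [intervalIntegral.integral_congr hcongr]
  have h1 : IntervalIntegrable (fun t : ℝ => x * (x-t)^n) volume 0 x := by
    apply Continuous.intervalIntegrable; continuity
  have h2 : IntervalIntegrable (fun t : ℝ => (x-t)^(n+1)) volume 0 x := by
    apply Continuous.intervalIntegrable; continuity
  rw [intervalIntegral.integral_sub h1 h2, intervalIntegral.integral_const_mul,
    integral_pow_kernel n hx, integral_pow_kernel (n+1) hx]
  have h3 : ((n:ℝ)+1) ≠ 0 := by positivity
  have h4 : ((n:ℝ)+1+1) ≠ 0 := by positivity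
  push_cast
  field_simp
  ring

lemma eq_part (d : ℕ) (hd : 2 ≤ d) :
    1 - 4 * (∫ t in Set.Ioi (0:ℝ),
        t * (deriv (fun x : ℝ => max (1 - x) 0 ^ (d - 1)) t) ^ 2)
      = -1 / (2*(d:ℝ) - 3) := by
  set ψL := fun x : ℝ => max (1 - x) 0 ^ (d - 1) with hψL
  have hd1 : 1 ≤ d - 1 := by omega
  -- derivative on (0,1)
  have hder1 : ∀ t ∈ Ioo (0:ℝ) 1, HasDerivAt ψL (-(((d:ℝ)-1) * (1-t)^(d-2))) t := by
    intro t ht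
    have hloc : ∀ᶠ x in nhds t, ψL x = (1 - x)^(d-1) := by
      have : Iio (1:ℝ) ∈ nhds t := Iio_mem_nhds ht.2
      filter_upwards [this] with x hx
      have : (0:ℝ) ≤ 1 - x := by simp at hx; linarith
      simp [hψL, max_eq_left this]
    have h1 : HasDerivAt (fun x : ℝ => (1 - x)^(d-1))
        (((d-1:ℕ):ℝ) * (1-t)^(d-1-1) * (-1)) t :=
      (((hasDerivAt_id t).const_sub 1)).pow (d-1)
    have h2 : (((d-1:ℕ):ℝ) * (1-t)^(d-1-1) * (-1)) = -(((d:ℝ)-1) * (1-t)^(d-2)) := by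
      have : d - 1 - 1 = d - 2 := by omega
      rw [this, Nat.cast_sub (by omega : 1 ≤ d)]
      push_cast; ring
    rw [h2] at h1
    exact h1.congr_of_eventuallyEq hloc
  have hder2 : ∀ t ∈ Ioi (1:ℝ), deriv ψL t = 0 := by
    intro t ht
    have hloc : ψL =ᶠ[nhds t] (fun _ => (0:ℝ)) := by
      have : Ioi (1:ℝ) ∈ nhds t := Ioi_mem_nhds ht
      filter_upwards [this] with x hx
      have hx1 : 1 - x < 0 := by simp at hx ⊢; linarith
      simp [hψL, max_eq_right hx1.le, zero_pow (by omega : d - 1 ≠ 0)]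
    rw [hloc.deriv_eq]
    simp
  -- the integrand equals an indicator a.e. on Ioi 0
  set g := Set.indicator (Ioo (0:ℝ) 1) (fun t => ((d:ℝ)-1)^2 * (t * (1-t)^(2*(d-2)))) with hg
  have hae : (fun t => t * (deriv ψL t)^2) =ᵐ[volume.restrict (Ioi (0:ℝ))] g := by
    have h1 : ∀ᵐ (t:ℝ) ∂(volume.restrict (Ioi (0:ℝ))), t ≠ 1 := by
      apply ae_restrict_of_ae
      refine ae_iff.2 ?_
      have : {a : ℝ | ¬ a ≠ 1} = {1} := by ext x; simp
      rw [this]; exact Real.volume_singleton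
    filter_upwards [h1, ae_restrict_mem measurableSet_Ioi] with t hne (ht : 0 < t)
    rcases lt_or_gt_of_ne hne with hlt | hgt
    · have htm : t ∈ Ioo (0:ℝ) 1 := ⟨ht, hlt⟩
      rw [hg, Set.indicator_of_mem htm, (hder1 t htm).deriv]
      rw [mul_comm 2 (d-2), pow_mul]
      ring
    · have htm : t ∉ Ioo (0:ℝ) 1 := fun h => absurd h.2 (not_lt.2 hgt.le)
      rw [hg, Set.indicator_of_notMem htm, hder2 t hgt]
      ring
  rw [integral_congr_ae hae]
  rw [hg, integral_indicator measurableSet_Ioo, Measure.restrict_restrict measurableSet_Ioo]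
  have hinter : Ioo (0:ℝ) 1 ∩ Ioi 0 = Ioo 0 1 := by
    ext x; simp; tauto
  rw [hinter]
  rw [← integral_Ioc_eq_integral_Ioo, ← intervalIntegral.integral_of_le (by norm_num : (0:ℝ) ≤ 1)]
  rw [intervalIntegral.integral_const_mul, integral_t_kernel (2*(d-2)) (by norm_num : (0:ℝ) ≤ 1)]
  have hc : ((2*(d-2):ℕ):ℝ) = 2*(d:ℝ) - 4 := by
    push_cast [Nat.cast_sub (by omega : 2 ≤ d)]; ring
  rw [hc, one_pow]
  have h3 : 2*(d:ℝ) - 3 ≠ 0 := by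
    have : (2:ℝ) ≤ (d:ℝ) := by exact_mod_cast hd
    nlinarith
  have h2 : 2*(d:ℝ) - 2 ≠ 0 := by
    have : (2:ℝ) ≤ (d:ℝ) := by exact_mod_cast hd
    nlinarith
  have hD : (2:ℝ) ≤ (d:ℝ) := by exact_mod_cast hd
  have harith : 2*(d:ℝ) - 4 + 1 = 2*(d:ℝ) - 3 := by ring
  have harith2 : 2*(d:ℝ) - 4 + 2 = 2*(d:ℝ) - 2 := by ring
  rw [harith, harith2]
  have h3' : (d:ℝ)*2 - 3 ≠ 0 := by linarith
  field_simp
  ring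



lemma measurable_antitoneOn {f : ℝ → ℝ} (h0 : ∀ x : ℝ, x ≤ 0 → f x = 0)
    (hnn : ∀ x, 0 ≤ f x) (hanti : AntitoneOn f (Ioi 0)) : Measurable f := by
  apply measurable_of_Ioi
  intro c
  rcases lt_or_ge c 0 with hc | hc
  · have : f ⁻¹' Ioi c = univ := eq_univ_of_forall fun x => lt_of_lt_of_le hc (hnn x)
    rw [this]; exact MeasurableSet.univ
  · have hsub : f ⁻¹' Ioi c ⊆ Ioi 0 := by
      intro x hx
      by_contra hx0
      have hx0' : x ≤ 0 := not_lt.1 (fun h => hx0 (mem_Ioi.2 h))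
      rw [mem_preimage, mem_Ioi, h0 x hx0'] at hx
      exact absurd hx (not_lt.2 hc)
    refine Set.OrdConnected.measurableSet ⟨fun x hx y hy z hz => ?_⟩
    have hx0 : (0:ℝ) < x := hsub hx
    have hz0 : z ∈ Ioi (0:ℝ) := mem_Ioi.2 (lt_of_lt_of_le hx0 hz.1)
    have hle : f y ≤ f z := hanti hz0 (hsub hy) hz.2
    exact mem_preimage.2 (lt_of_lt_of_le (mem_preimage.1 hy) hle)

lemma lintegral_iUnion_sup {f : ℝ → ENNReal} (hf : Measurable f) {S : ℕ → Set ℝ}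
    (hmono : Monotone S) (hmeas : ∀ n, MeasurableSet (S n)) :
    ∫⁻ x in ⋃ n, S n, f x = ⨆ n, ∫⁻ x in S n, f x := by
  rw [← lintegral_indicator (MeasurableSet.iUnion hmeas)]
  have hpt : ∀ x, (⋃ n, S n).indicator f x = ⨆ n, (S n).indicator f x := by
    intro x
    by_cases hx : x ∈ ⋃ n, S n
    · obtain ⟨n, hn⟩ := mem_iUnion.1 hx
      rw [indicator_of_mem hx]
      refine le_antisymm (le_iSup_of_le n (le_of_eq (indicator_of_mem hn f).symm)) ?_
      exact iSup_le fun k => Set.indicator_le_self _ _ x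
    · rw [indicator_of_notMem hx]
      symm
      simp only [ENNReal.iSup_eq_zero]
      intro k
      exact indicator_of_notMem (fun hk => hx (mem_iUnion.2 ⟨k, hk⟩)) f
  simp_rw [hpt]
  rw [lintegral_iSup (fun n => hf.indicator (hmeas n))
    (fun n m hnm => indicator_le_indicator_of_subset (hmono hnm) (fun x => zero_le))]
  simp_rw [lintegral_indicator (hmeas _)]

lemma tail_repr {F G : ℝ → ℝ} (hG : Measurable G)
    (hGnn : ∀ x : ℝ, 0 < x → 0 ≤ G x)
    (hInt : ∀ a b : ℝ, 0 < a → a ≤ b → IntervalIntegrable G volume a b)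
    (hFTC : ∀ a b : ℝ, 0 < a → a ≤ b → F a - F b = ∫ x in a..b, G x)
    (hF0 : Tendsto F atTop (nhds 0)) {a : ℝ} (ha : 0 < a) :
    ENNReal.ofReal (F a) = ∫⁻ x in Ioi a, ENNReal.ofReal (G x) := by
  have hU : Ioi a = ⋃ n : ℕ, Ioc a (a + ((n:ℝ)+1)) := by
    ext x; simp only [mem_Ioi, mem_iUnion, mem_Ioc]
    constructor
    · intro hx
      obtain ⟨n, hn⟩ := exists_nat_ge (x - a)
      exact ⟨n, hx, by linarith⟩
    · rintro ⟨n, hn, -⟩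
      exact hn
  have hmonoS : Monotone (fun n : ℕ => Ioc a (a + ((n:ℝ)+1))) := by
    intro n m hnm
    apply Ioc_subset_Ioc_right
    have : (n:ℝ) ≤ (m:ℝ) := Nat.cast_le.2 hnm
    linarith
  rw [hU, lintegral_iUnion_sup hG.ennreal_ofReal hmonoS (fun n => measurableSet_Ioc)]
  have heach : ∀ n : ℕ, ∫⁻ x in Ioc a (a + ((n:ℝ)+1)), ENNReal.ofReal (G x)
      = ENNReal.ofReal (F a - F (a + ((n:ℝ)+1))) := by
    intro n
    have hab : a ≤ a + ((n:ℝ)+1) := by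
      have : (0:ℝ) ≤ (n:ℝ) := Nat.cast_nonneg n
      linarith
    rw [hFTC a _ ha hab, intervalIntegral.integral_of_le hab]
    rw [← MeasureTheory.ofReal_integral_eq_lintegral_ofReal
      ((intervalIntegrable_iff_integrableOn_Ioc_of_le hab).1 (hInt a _ ha hab))
      ((ae_restrict_iff' measurableSet_Ioc).2 (ae_of_all _ fun x hx => hGnn x (lt_trans ha hx.1)))]
  simp_rw [heach]
  have hmono2 : Monotone (fun n : ℕ => ENNReal.ofReal (F a - F (a + ((n:ℝ)+1)))) := by
    intro n m hnm
    apply ENNReal.ofReal_le_ofReal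
    have hcast : (n:ℝ) ≤ (m:ℝ) := Nat.cast_le.2 hnm
    have h1 : 0 < a + ((n:ℝ)+1) := by
      have : (0:ℝ) ≤ (n:ℝ) := Nat.cast_nonneg n
      linarith
    have h2 : a + ((n:ℝ)+1) ≤ a + ((m:ℝ)+1) := by linarith
    have h3 := hFTC _ _ h1 h2
    have h4 : 0 ≤ ∫ x in (a + ((n:ℝ)+1))..(a + ((m:ℝ)+1)), G x :=
      intervalIntegral.integral_nonneg h2 (fun x hx => hGnn x (lt_of_lt_of_le h1 hx.1))
    linarith
  have hbtend : Tendsto (fun n : ℕ => a + ((n:ℝ)+1)) atTop atTop := by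
    apply tendsto_atTop_add_const_left
    apply tendsto_atTop_add_const_right
    exact tendsto_natCast_atTop_atTop
  have htend : Tendsto (fun n : ℕ => ENNReal.ofReal (F a - F (a + ((n:ℝ)+1)))) atTop
      (nhds (ENNReal.ofReal (F a))) := by
    have hF : Tendsto (fun n : ℕ => F a - F (a + ((n:ℝ)+1))) atTop (nhds (F a)) := by
      have h5 : Tendsto (fun _ : ℕ => F a) atTop (nhds (F a)) := tendsto_const_nhds
      have := h5.sub (hF0.comp hbtend)
      simpa using this
    exact (ENNReal.continuous_ofReal.tendsto _).comp hF
  exact (tendsto_nhds_unique (tendsto_atTop_iSup hmono2) htend).symm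



/-- Right derivative of a function via infimum of slopes. -/
def rderiv (h : ℝ → ℝ) (x : ℝ) : ℝ := sInf (slope h x '' Ioi x)

variable {h : ℝ → ℝ}

lemma rderiv_bddBelow (hconv : ConvexOn ℝ (Ioi 0) h) {x : ℝ} (hx : 0 < x) :
    BddBelow (slope h x '' Ioi x) := by
  refine ⟨slope h x (x/2), ?_⟩
  rintro s ⟨y, hy, rfl⟩
  have hmem1 : x/2 ∈ Ioi 0 \ {x} := by
    constructor
    · exact mem_Ioi.2 (by linarith)
    · simp; intro hh; linarith
  have hmem2 : y ∈ Ioi 0 \ {x} := by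
    constructor
    · exact mem_Ioi.2 (lt_trans hx (mem_Ioi.1 hy))
    · simp; intro hh; rw [hh] at hy; exact lt_irrefl x (mem_Ioi.1 hy)
  exact hconv.slope_mono (mem_Ioi.2 hx) hmem1 hmem2 (le_trans (by linarith) (mem_Ioi.1 hy).le)

lemma rderiv_hasDerivWithinAt (hconv : ConvexOn ℝ (Ioi 0) h) {x : ℝ} (hx : 0 < x) :
    HasDerivWithinAt h (rderiv h x) (Ioi x) x := by
  rw [hasDerivWithinAt_iff_tendsto_slope]
  have hns : Ioi x \ {x} = Ioi x := Set.diff_singleton_eq_self (fun hmem => lt_irrefl x (mem_Ioi.1 hmem))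
  rw [hns]
  have hmono : MonotoneOn (slope h x) (Ioi x) := by
    have hsub : Ioi x ⊆ (Ioi 0 \ {x}) := by
      intro y hy
      exact ⟨mem_Ioi.2 (lt_trans hx (mem_Ioi.1 hy)), by simp; intro hh; rw [hh] at hy; exact lt_irrefl x (mem_Ioi.1 hy)⟩
    exact (hconv.slope_mono (mem_Ioi.2 hx)).mono hsub
  exact hmono.tendsto_nhdsGT (rderiv_bddBelow hconv hx)

lemma rderiv_le_slope (hconv : ConvexOn ℝ (Ioi 0) h) {x y : ℝ} (hx : 0 < x) (hxy : x < y) :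
    rderiv h x ≤ slope h x y :=
  csInf_le (rderiv_bddBelow hconv hx) (mem_image_of_mem _ (mem_Ioi.2 hxy))

lemma slope_le_rderiv (hconv : ConvexOn ℝ (Ioi 0) h) {x y : ℝ} (hx : 0 < x) (hxy : x < y) :
    slope h x y ≤ rderiv h y := by
  apply le_csInf (⟨slope h y (y+1), mem_image_of_mem _ (mem_Ioi.2 (by linarith))⟩)
  rintro s ⟨z, hz, rfl⟩
  have hy0 : (0:ℝ) < y := lt_trans hx hxy
  have hmemx : x ∈ Ioi 0 \ {y} := ⟨mem_Ioi.2 hx, by simp; intro hh; rw [hh] at hxy; exact lt_irrefl y hxy⟩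
  have hmemz : z ∈ Ioi 0 \ {y} := ⟨mem_Ioi.2 (lt_trans hy0 (mem_Ioi.1 hz)), by simp; intro hh; rw [hh] at hz; exact lt_irrefl y (mem_Ioi.1 hz)⟩
  calc slope h x y = slope h y x := slope_comm h x y
    _ ≤ slope h y z := hconv.slope_mono (mem_Ioi.2 hy0) hmemx hmemz (le_trans hxy.le (mem_Ioi.1 hz).le)

lemma rderiv_mono (hconv : ConvexOn ℝ (Ioi 0) h) : MonotoneOn (rderiv h) (Ioi 0) := by
  intro x hx y hy hxy
  rcases eq_or_lt_of_le hxy with rfl | hlt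
  · exact le_rfl
  · exact le_trans (rderiv_le_slope hconv (mem_Ioi.1 hx) hlt) (slope_le_rderiv hconv (mem_Ioi.1 hx) hlt)

lemma rderiv_nonpos (hconv : ConvexOn ℝ (Ioi 0) h) (hanti : AntitoneOn h (Ioi 0)) {x : ℝ}
    (hx : 0 < x) : rderiv h x ≤ 0 := by
  apply le_trans (rderiv_le_slope hconv hx (by linarith : x < x + 1))
  rw [slope_def_field]
  apply div_nonpos_of_nonpos_of_nonneg
  · have := hanti (mem_Ioi.2 hx) (mem_Ioi.2 (by linarith : (0:ℝ) < x + 1)) (by linarith)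
    linarith
  · linarith

lemma convex_FTC (hconv : ConvexOn ℝ (Ioi 0) h) {a b : ℝ} (ha : 0 < a) (hab : a ≤ b) :
    ∫ x in a..b, rderiv h x = h b - h a := by
  have hIcc : Icc a b ⊆ Ioi 0 := fun x hx => mem_Ioi.2 (lt_of_lt_of_le ha hx.1)
  apply intervalIntegral.integral_eq_sub_of_hasDeriv_right_of_le hab
  · exact (hconv.continuousOn isOpen_Ioi).mono hIcc
  · intro x hx
    exact rderiv_hasDerivWithinAt hconv (lt_of_lt_of_le ha hx.1.le)
  · apply MonotoneOn.intervalIntegrable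
    rw [uIcc_of_le hab]
    exact (rderiv_mono hconv).mono hIcc



lemma integral_pow_kernel2 (j : ℕ) {t v : ℝ} : ∫ u in t..v, (u - t)^j = (v - t)^(j+1) / (j+1) := by
  have hne : ((j:ℝ)+1) ≠ 0 := by positivity
  have hder : ∀ u ∈ uIcc t v, HasDerivAt (fun u : ℝ => (u-t)^(j+1) / (j+1)) ((u-t)^j) u := by
    intro u _
    have h1 : HasDerivAt (fun u : ℝ => u - t) 1 u := (hasDerivAt_id u).sub_const t
    have h2 := (h1.pow (j+1)).div_const ((j:ℝ)+1)
    refine h2.congr_deriv ?_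
    push_cast
    field_simp
  have hint : IntervalIntegrable (fun u : ℝ => (u-t)^j) volume t v := by
    apply Continuous.intervalIntegrable; continuity
  rw [intervalIntegral.integral_eq_sub_of_hasDerivAt hder hint]
  simp

lemma lint_Ioo_of_integral {f : ℝ → ℝ} (hf : Continuous f) {t v : ℝ}
    (hnn : ∀ u ∈ Ioc t v, 0 ≤ f u) (htv : t ≤ v) :
    ∫⁻ u in Ioo t v, ENNReal.ofReal (f u) = ENNReal.ofReal (∫ u in t..v, f u) := by
  rw [setLIntegral_congr Ioo_ae_eq_Ioc]
  rw [intervalIntegral.integral_of_le htv]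
  rw [← MeasureTheory.ofReal_integral_eq_lintegral_ofReal]
  · exact (intervalIntegrable_iff_integrableOn_Ioc_of_le htv).1 (hf.intervalIntegrable t v)
  · exact (ae_restrict_iff' measurableSet_Ioc).2 (ae_of_all _ hnn)

lemma lint_A (i : ℕ) {t v : ℝ} (htv : t ≤ v) :
    ∫⁻ u in Ioo t v, ENNReal.ofReal ((v-u)^i / i.factorial)
      = ENNReal.ofReal ((v-t)^(i+1) / (i+1).factorial) := by
  have hfac : (0:ℝ) < i.factorial := by exact_mod_cast i.factorial_pos
  rw [lint_Ioo_of_integral (by continuity) (fun u hu => div_nonneg (pow_nonneg (by linarith [hu.2] : (0:ℝ) ≤ v - u) i) hfac.le) htv]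
  congr 1
  rw [intervalIntegral.integral_div, integral_pow_kernel i htv]
  rw [Nat.factorial_succ]
  push_cast
  have h1 : ((i:ℝ)+1) ≠ 0 := by positivity
  field_simp

lemma lint_B (i : ℕ) {t v : ℝ} (htv : t ≤ v) :
    ∫⁻ u in Ioo t v, ENNReal.ofReal ((u-t)^i / i.factorial)
      = ENNReal.ofReal ((v-t)^(i+1) / (i+1).factorial) := by
  have hfac : (0:ℝ) < i.factorial := by exact_mod_cast i.factorial_pos
  rw [lint_Ioo_of_integral (by continuity)
    (fun u hu => div_nonneg (pow_nonneg (by linarith [hu.1] : (0:ℝ) ≤ u - t) i) hfac.le) htv]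
  congr 1
  rw [intervalIntegral.integral_div, integral_pow_kernel2 i]
  rw [Nat.factorial_succ]
  push_cast
  have h1 : ((i:ℝ)+1) ≠ 0 := by positivity
  field_simp

lemma lint_T (n : ℕ) {x : ℝ} (hx : 0 ≤ x) {c : ℝ} (hc : 0 < c) :
    ∫⁻ u in Ioo 0 x, ENNReal.ofReal (u * (x-u)^n / c)
      = ENNReal.ofReal (x^(n+2) / (((n:ℝ)+1)*((n:ℝ)+2)*c)) := by
  rw [lint_Ioo_of_integral (by continuity)
    (fun u hu => div_nonneg (mul_nonneg (le_of_lt hu.1) (pow_nonneg (by linarith [hu.2] : (0:ℝ) ≤ x - u) n)) hc.le) hx]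
  congr 1
  rw [intervalIntegral.integral_div, integral_t_kernel n hx]
  have h1 : ((n:ℝ)+1) ≠ 0 := by positivity
  have h2 : ((n:ℝ)+2) ≠ 0 := by positivity
  field_simp


lemma lint_shift {t u : ℝ} (htu : t ≤ u) (F : ℝ → ENNReal) :
    ∫⁻ v in Ioi t, (if u < v then F v else 0) = ∫⁻ v in Ioi u, F v := by
  have h1 : ∀ v, (if u < v then F v else 0) = (Ioi u).indicator F v := by
    intro v; rw [Set.indicator_apply]; simp [mem_Ioi]
  simp_rw [h1]
  rw [lintegral_indicator measurableSet_Ioi, Measure.restrict_restrict measurableSet_Ioi]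
  congr 1
  rw [Ioi_inter_Ioi, max_eq_left htu]

lemma lint_chop {t v : ℝ} (F : ℝ → ENNReal) :
    ∫⁻ u in Ioi t, (if u < v then F u else 0) = ∫⁻ u in Ioo t v, F u := by
  have h1 : ∀ u, (if u < v then F u else 0) = (Iio v).indicator F u := by
    intro u; rw [Set.indicator_apply]; simp [mem_Iio]
  simp_rw [h1]
  rw [lintegral_indicator measurableSet_Iio, Measure.restrict_restrict measurableSet_Iio]
  congr 1
  rw [Set.Iio_inter_Ioi]

lemma ofReal_sqrt_mul_self (t : ℝ) :
    ENNReal.ofReal (Real.sqrt t) * ENNReal.ofReal (Real.sqrt t) = ENNReal.ofReal t := by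
  rcases le_or_gt 0 t with ht | ht
  · rw [← ENNReal.ofReal_mul (Real.sqrt_nonneg t), Real.mul_self_sqrt ht]
  · have h1 : Real.sqrt t = 0 := Real.sqrt_eq_zero_of_nonpos ht.le
    rw [h1]
    simp [ENNReal.ofReal_of_nonpos ht.le]

set_option maxHeartbeats 1000000 in
lemma ineq_part (d : ℕ) (hd : 2 ≤ d) (ψ : ℝ → ℝ) (hψ : IsArchGen ψ)
    (hmon : DMonotoneOn d ψ) :
    -1 / (2*(d:ℝ) - 3) ≤ 1 - 4 * ∫ t in Set.Ioi (0:ℝ), t * (deriv ψ t) ^ 2 := by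
  classical
  obtain ⟨hcont, hantiψ, hψ0, hψtop, hbounds, -⟩ := hψ
  obtain ⟨-, hdiffk, hsignk, hantih, hconvh⟩ := hmon
  obtain ⟨m, hm⟩ : ∃ m, d - 2 = m := ⟨d - 2, rfl⟩
  rw [hm] at hantih hconvh
  have hdm : d = m + 2 := by omega
  have hdcast : (d:ℝ) = (m:ℝ) + 2 := by rw [hdm]; push_cast; ring
  set φ : ℕ → ℝ → ℝ := fun j x => (-1:ℝ)^j * iteratedDeriv j ψ x with hφ
  have hφψ : φ 0 = ψ := funext fun x => by simp [hφ]
  have hantih' : AntitoneOn (φ m) (Ioi 0) := hantih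
  have hconvh' : ConvexOn ℝ (Ioi 0) (φ m) := hconvh
  -- basic calculus facts
  have hdiff : ∀ j, j < m → ∀ x : ℝ, 0 < x → DifferentiableAt ℝ (iteratedDeriv j ψ) x :=
    fun j hj x hx => hdiffk j (by omega) x (mem_Ioi.2 hx)
  have hsign : ∀ j, j ≤ m → ∀ x : ℝ, 0 < x → 0 ≤ φ j x :=
    fun j hj x hx => hsignk j (by omega) x (mem_Ioi.2 hx)
  have hL1 : ∀ j, j < m → ∀ x : ℝ, 0 < x → HasDerivAt (φ j) (-(φ (j+1) x)) x := by
    intro j hj x hx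
    have h1 : HasDerivAt (iteratedDeriv j ψ) (iteratedDeriv (j+1) ψ x) x := by
      rw [iteratedDeriv_succ]
      exact (hdiff j hj x hx).hasDerivAt
    have h2 := h1.const_mul ((-1:ℝ)^j)
    have h3 : -(φ (j+1) x) = (-1:ℝ)^j * iteratedDeriv (j+1) ψ x := by
      simp only [hφ, pow_succ]; ring
    rw [h3]
    exact h2
  have hcontφ : ∀ j, j ≤ m → ContinuousOn (φ j) (Ioi 0) := by
    intro j hj
    rcases eq_or_lt_of_le hj with rfl | hlt
    · exact hconvh'.continuousOn isOpen_Ioi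
    · exact fun x hx => ((hL1 j hlt x (mem_Ioi.1 hx)).continuousAt).continuousWithinAt
  have hantiφ : ∀ j, j ≤ m → AntitoneOn (φ j) (Ioi 0) := by
    intro j hj
    rcases eq_or_lt_of_le hj with rfl | hlt
    · exact hantih'
    · apply antitoneOn_of_deriv_nonpos (convex_Ioi 0) (hcontφ j hj)
      · intro x hx
        rw [interior_Ioi] at hx
        exact ((hL1 j hlt x (mem_Ioi.1 hx)).differentiableAt).differentiableWithinAt
      · intro x hx
        rw [interior_Ioi] at hx
        rw [(hL1 j hlt x (mem_Ioi.1 hx)).deriv]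
        have := hsign (j+1) (by omega) x (mem_Ioi.1 hx)
        linarith
  have hFTCφ : ∀ j, j < m → ∀ a b : ℝ, 0 < a → a ≤ b →
      φ j a - φ j b = ∫ x in a..b, φ (j+1) x := by
    intro j hj a b ha hab
    have hIcc : uIcc a b ⊆ Ioi (0:ℝ) := by
      rw [uIcc_of_le hab]
      exact fun x hx => mem_Ioi.2 (lt_of_lt_of_le ha hx.1)
    have hform := intervalIntegral.integral_eq_sub_of_hasDerivAt
      (f := φ j) (f' := fun x => -(φ (j+1) x))
      (fun x hx => hL1 j hj x (mem_Ioi.1 (hIcc hx)))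
      ((((hcontφ (j+1) (by omega)).mono hIcc).intervalIntegrable).neg)
    rw [intervalIntegral.integral_neg] at hform
    linarith
  have htendφ : ∀ j, j ≤ m → Tendsto (φ j) atTop (nhds 0) := by
    intro j
    induction j with
    | zero => intro _; rw [hφψ]; exact hψtop
    | succ n ih =>
      intro hn
      have hnm : n < m := by omega
      have hub : ∀ y : ℝ, 2 ≤ y → φ (n+1) y ≤ (φ n 1) / (y - 1) := by
        intro y hy
        have h12 : (1:ℝ) ≤ y := by linarith
        have hFTC := hFTCφ n hnm 1 y one_pos h12
        have hint : IntervalIntegrable (φ (n+1)) volume 1 y := by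
          apply ContinuousOn.intervalIntegrable
          apply (hcontφ (n+1) hn).mono
          rw [uIcc_of_le h12]
          exact fun x hx => mem_Ioi.2 (by linarith [hx.1])
        have hlow : φ (n+1) y * (y - 1) ≤ ∫ x in (1:ℝ)..y, φ (n+1) x := by
          calc φ (n+1) y * (y-1) = ∫ _x in (1:ℝ)..y, φ (n+1) y := by
                rw [intervalIntegral.integral_const]; simp [smul_eq_mul]; ring
          _ ≤ ∫ x in (1:ℝ)..y, φ (n+1) x := by
                apply intervalIntegral.integral_mono_on h12 intervalIntegrable_const hint
                intro x hx
                have hx0 : (0:ℝ) < x := by linarith [hx.1]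
                have hy0 : (0:ℝ) < y := by linarith
                exact hantiφ (n+1) hn (mem_Ioi.2 hx0) (mem_Ioi.2 hy0) hx.2
        have hupper : φ n 1 - φ n y ≤ φ n 1 := by
          have := hsign n (by omega) y (by linarith)
          linarith
        rw [le_div_iff₀ (by linarith : (0:ℝ) < y - 1)]
        calc φ (n+1) y * (y-1) ≤ ∫ x in (1:ℝ)..y, φ (n+1) x := hlow
        _ = φ n 1 - φ n y := hFTC.symm
        _ ≤ φ n 1 := hupper
      refine squeeze_zero' (g := fun y => φ n 1 / (y - 1)) ?_ ?_ ?_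
      · filter_upwards [eventually_ge_atTop (2:ℝ)] with y hy
        exact hsign (n+1) hn y (by linarith)
      · filter_upwards [eventually_ge_atTop (2:ℝ)] with y hy
        exact hub y hy
      · apply Tendsto.div_atTop (tendsto_const_nhds)
        have : Tendsto (fun y : ℝ => y + (-1)) atTop atTop :=
          tendsto_atTop_add_const_right atTop (-1) tendsto_id
        simpa [sub_eq_add_neg] using this
  -- the right-derivative density rr
  set rr : ℝ → ℝ := fun x => if 0 < x then -(rderiv (φ m) x) else 0 with hrrdef
  have hrr0 : ∀ x : ℝ, x ≤ 0 → rr x = 0 := fun x hx => if_neg (not_lt.2 hx)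
  have hrrpos : ∀ x : ℝ, 0 < x → rr x = -(rderiv (φ m) x) := fun x hx => if_pos hx
  have hrrnn : ∀ x, 0 ≤ rr x := by
    intro x
    rcases le_or_gt x 0 with hx | hx
    · rw [hrr0 x hx]
    · rw [hrrpos x hx]
      have := rderiv_nonpos hconvh' hantih' hx
      linarith
  have hrranti : AntitoneOn rr (Ioi 0) := by
    intro x hx y hy hxy
    rw [hrrpos x (mem_Ioi.1 hx), hrrpos y (mem_Ioi.1 hy)]
    have := rderiv_mono hconvh' hx hy hxy
    linarith
  have hrrmeas : Measurable rr := measurable_antitoneOn hrr0 hrrnn hrranti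
  have hrrint : ∀ a b : ℝ, 0 < a → a ≤ b → IntervalIntegrable rr volume a b := by
    intro a b ha hab
    apply AntitoneOn.intervalIntegrable
    rw [uIcc_of_le hab]
    exact hrranti.mono (fun x hx => mem_Ioi.2 (lt_of_lt_of_le ha hx.1))
  have hFTCh : ∀ a b : ℝ, 0 < a → a ≤ b → φ m a - φ m b = ∫ x in a..b, rr x := by
    intro a b ha hab
    have h1 := convex_FTC hconvh' ha hab
    have h2 : ∫ x in a..b, rr x = ∫ x in a..b, -(rderiv (φ m) x) := by
      apply intervalIntegral.integral_congr
      intro x hx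
      rw [uIcc_of_le hab] at hx
      exact hrrpos x (lt_of_lt_of_le ha hx.1)
    rw [h2, intervalIntegral.integral_neg, h1]
    ring
  -- representation by iterated tail integrals
  have hφmeas : ∀ j, 1 ≤ j → Measurable (φ j) := by
    intro j hj
    obtain ⟨k, rfl⟩ : ∃ k, j = k + 1 := ⟨j - 1, by omega⟩
    have h1 : Measurable (iteratedDeriv (k+1) ψ) := by
      rw [iteratedDeriv_succ]; exact measurable_deriv _
    exact h1.const_mul _
  have hP : ∀ i, i ≤ m → ∀ t : ℝ, 0 < t →
      ENNReal.ofReal (φ (m - i) t)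
        = ∫⁻ u in Ioi t, ENNReal.ofReal ((u-t)^i / i.factorial) * ENNReal.ofReal (rr u) := by
    intro i
    induction i with
    | zero =>
      intro _ t ht
      have h1 := tail_repr (F := φ m) (G := rr) hrrmeas (fun x _ => hrrnn x) hrrint hFTCh
        (htendφ m le_rfl) ht
      rw [Nat.sub_zero, h1]
      refine setLIntegral_congr_fun measurableSet_Ioi (fun u _ => ?_)
      simp
    | succ i ih =>
      intro hi t ht
      have him : i ≤ m := by omega
      have hji : m - (i+1) < m := by omega
      have hsucc : m - (i+1) + 1 = m - i := by omega
      have hmi1 : 1 ≤ m - i := by omega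
      have hrep := tail_repr (F := φ (m - (i+1))) (G := φ (m - i))
        (hφmeas (m - i) hmi1)
        (fun x hx => hsign (m-i) (by omega) x hx)
        (fun a b ha hab => by
          apply ContinuousOn.intervalIntegrable
          apply (hcontφ (m-i) (by omega)).mono
          rw [uIcc_of_le hab]
          exact fun x hx => mem_Ioi.2 (lt_of_lt_of_le ha hx.1))
        (fun a b ha hab => by
          have := hFTCφ (m - (i+1)) hji a b ha hab
          rwa [hsucc] at this)
        (htendφ (m-(i+1)) (by omega)) ht
      rw [hrep]
      -- substitute ih and apply Tonelli
      set F2 : ℝ → ℝ → ENNReal := fun u v =>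
        if u < v then ENNReal.ofReal ((v-u)^i / i.factorial) * ENNReal.ofReal (rr v) else 0
        with hF2
      have hF2meas : Measurable (Function.uncurry F2) := by
        apply Measurable.ite (measurableSet_lt measurable_fst measurable_snd)
        · apply Measurable.fun_mul
          · apply Measurable.ennreal_ofReal
            exact (((measurable_snd.sub measurable_fst).pow_const i).div_const _)
          · exact (hrrmeas.comp measurable_snd).ennreal_ofReal
        · exact measurable_const
      have hstep1 : ∫⁻ u in Ioi t, ENNReal.ofReal (φ (m-i) u)
          = ∫⁻ u in Ioi t, ∫⁻ v in Ioi t, F2 u v := by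
        refine setLIntegral_congr_fun measurableSet_Ioi (fun u hu => ?_)
        rw [ih him u (lt_trans ht hu)]
        rw [← lint_shift (le_of_lt hu) (fun v => ENNReal.ofReal ((v-u)^i / i.factorial) * ENNReal.ofReal (rr v))]
      rw [hstep1]
      rw [lintegral_lintegral_swap hF2meas.aemeasurable]
      refine setLIntegral_congr_fun measurableSet_Ioi (fun v hv => ?_)
      have hv' : t < v := hv
      -- inner integral over u
      have h4 : ∀ u : ℝ, F2 u v
          = (if u < v then ENNReal.ofReal ((v-u)^i / i.factorial) else 0) * ENNReal.ofReal (rr v) := by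
        intro u
        by_cases h : u < v
        · simp only [hF2, if_pos h]
        · simp only [hF2, if_neg h, zero_mul]
      simp_rw [h4]
      rw [lintegral_mul_const' _ _ ENNReal.ofReal_ne_top]
      rw [lint_chop (fun u => ENNReal.ofReal ((v-u)^i / i.factorial))]
      rw [lint_A i hv'.le]
  -- layer-cake quantities
  set Sa : ℝ → Set ℝ := fun a => {s : ℝ | 0 < s ∧ a < rr s} with hSadef
  set X : ℝ → ℝ := fun a => if 0 < a then sSup (Sa a) else 0 with hXdef
  have hX0 : ∀ a : ℝ, a ≤ 0 → X a = 0 := fun a ha => if_neg (not_lt.2 ha)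
  have hXpos : ∀ a : ℝ, 0 < a → X a = sSup (Sa a) := fun a ha => if_pos ha
  have hXbdd : ∀ a : ℝ, 0 < a → BddAbove (Sa a) := by
    intro a ha
    by_contra hub
    have hall : ∀ s : ℝ, 0 < s → a < rr s := by
      intro s hs
      rw [not_bddAbove_iff] at hub
      obtain ⟨x, hx, hsx⟩ := hub s
      exact lt_of_lt_of_le hx.2 (hrranti (mem_Ioi.2 hs) (mem_Ioi.2 hx.1) hsx.le)
    have h1 := hP 0 (Nat.zero_le m) 1 one_pos
    rw [Nat.sub_zero] at h1
    have h2 : (⊤:ENNReal) ≤ ∫⁻ u in Ioi (1:ℝ), ENNReal.ofReal ((u-(1:ℝ))^0 / Nat.factorial 0) * ENNReal.ofReal (rr u) := by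
      have h3 : ∫⁻ _u in Ioi (1:ℝ), ENNReal.ofReal a = ⊤ := by
        rw [setLIntegral_const]
        rw [Real.volume_Ioi]
        exact ENNReal.mul_top (by simpa using ha)
      rw [← h3]
      apply setLIntegral_mono' measurableSet_Ioi
      intro u hu
      have : a < rr u := hall u (lt_trans one_pos hu)
      simp only [pow_zero, Nat.factorial_zero, Nat.cast_one]
      rw [div_one, ENNReal.ofReal_one, one_mul]
      exact ENNReal.ofReal_le_ofReal this.le
    rw [← h1] at h2
    exact (lt_irrefl ⊤ (lt_of_le_of_lt h2 (ENNReal.ofReal_lt_top))).elim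
  have hXnn : ∀ a : ℝ, 0 ≤ X a := by
    intro a
    rcases le_or_gt a 0 with ha | ha
    · rw [hX0 a ha]
    · rw [hXpos a ha]
      rcases eq_empty_or_nonempty (Sa a) with he | ⟨s, hs⟩
      · rw [he, Real.sSup_empty]
      · exact le_trans hs.1.le (le_csSup (hXbdd a ha) hs)
  have hXub : ∀ a : ℝ, 0 < a → ∀ s, s ∈ Sa a → s ≤ X a := by
    intro a ha s hs
    rw [hXpos a ha]
    exact le_csSup (hXbdd a ha) hs
  have hXmem : ∀ a : ℝ, 0 < a → ∀ s : ℝ, 0 < s → s < X a → a < rr s := by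
    intro a ha s hs hsX
    rw [hXpos a ha] at hsX
    have hne : (Sa a).Nonempty := by
      by_contra hne
      rw [not_nonempty_iff_eq_empty] at hne
      rw [hne, Real.sSup_empty] at hsX
      linarith
    obtain ⟨x, hx, hsx⟩ := exists_lt_of_lt_csSup hne hsX
    exact lt_of_lt_of_le hx.2 (hrranti (mem_Ioi.2 hs) (mem_Ioi.2 hx.1) hsx.le)
  have hXanti : AntitoneOn X (Ioi 0) := by
    intro a ha b hb hab
    rcases eq_empty_or_nonempty (Sa b) with he | hne
    · rw [hXpos b (mem_Ioi.1 hb), he, Real.sSup_empty]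
      exact hXnn a
    · rw [hXpos a (mem_Ioi.1 ha), hXpos b (mem_Ioi.1 hb)]
      apply csSup_le_csSup (hXbdd a (mem_Ioi.1 ha)) hne
      intro s hs
      exact ⟨hs.1, lt_of_le_of_lt hab hs.2⟩
  have hXmeas : Measurable X := measurable_antitoneOn hX0 hXnn hXanti
  -- layer cake collapse
  have hlayer : ∀ u : ℝ, ENNReal.ofReal (rr u) = ∫⁻ a in Ioi 0, (if a < rr u then (1:ENNReal) else 0) := by
    intro u
    have h1 : ∀ a : ℝ, (if a < rr u then (1:ENNReal) else 0) = (Iio (rr u)).indicator (fun _ => 1) a := by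
      intro a; rw [Set.indicator_apply]; simp [mem_Iio]
    simp_rw [h1]
    rw [lintegral_indicator measurableSet_Iio, Measure.restrict_restrict measurableSet_Iio,
      setLIntegral_one]
    have h2 : Iio (rr u) ∩ Ioi 0 = Ioo 0 (rr u) := by
      ext x; simp only [mem_inter_iff, mem_Iio, mem_Ioi, mem_Ioo]; tauto
    rw [h2, Real.volume_Ioo, sub_zero]
  have hLC : ∀ i : ℕ, ∀ t : ℝ, 0 < t →
      ∫⁻ u in Ioi t, ENNReal.ofReal ((u-t)^i / i.factorial) * ENNReal.ofReal (rr u)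
      = ∫⁻ a in Ioi 0, (if t < X a then ENNReal.ofReal ((X a - t)^(i+1)/(i+1).factorial) else 0) := by
    intro i t ht
    set G2 : ℝ → ℝ → ENNReal := fun u a =>
      ENNReal.ofReal ((u-t)^i / i.factorial) * (if a < rr u then (1:ENNReal) else 0) with hG2
    have hG2meas : Measurable (Function.uncurry G2) := by
      apply Measurable.fun_mul
      · apply Measurable.ennreal_ofReal
        exact ((measurable_fst.sub_const t).pow_const i).div_const _
      · apply Measurable.ite (measurableSet_lt measurable_snd (hrrmeas.comp measurable_fst))
          measurable_const measurable_const
    have hstep1 : ∫⁻ u in Ioi t, ENNReal.ofReal ((u-t)^i / i.factorial) * ENNReal.ofReal (rr u)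
        = ∫⁻ u in Ioi t, ∫⁻ a in Ioi 0, G2 u a := by
      refine setLIntegral_congr_fun measurableSet_Ioi (fun u _ => ?_)
      rw [hlayer u, ← lintegral_const_mul' _ _ ENNReal.ofReal_ne_top]
    rw [hstep1, lintegral_lintegral_swap hG2meas.aemeasurable]
    refine setLIntegral_congr_fun measurableSet_Ioi (fun a ha => ?_)
    have ha' : (0:ℝ) < a := ha
    -- inner integral over u for fixed a
    have h4 : ∀ u : ℝ, G2 u a = ({s : ℝ | a < rr s}).indicator (fun u => ENNReal.ofReal ((u-t)^i / i.factorial)) u := by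
      intro u
      rw [hG2, Set.indicator_apply]
      simp only [mem_setOf_eq]
      by_cases h : a < rr u
      · rw [if_pos h, if_pos h, mul_one]
      · rw [if_neg h, if_neg h, mul_zero]
    simp_rw [h4]
    have hmeasS : MeasurableSet {s : ℝ | a < rr s} := hrrmeas measurableSet_Ioi
    rw [lintegral_indicator hmeasS, Measure.restrict_restrict hmeasS]
    set E : Set ℝ := {s : ℝ | a < rr s} ∩ Ioi t with hE
    rcases le_or_gt (X a) t with hle | hgt
    · have hEempty : E = ∅ := by
        ext u
        simp only [hE, mem_inter_iff, mem_setOf_eq, mem_Ioi, mem_empty_iff_false, iff_false]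
        rintro ⟨h1, h2⟩
        have : u ≤ X a := hXub a ha' u ⟨lt_trans ht h2, h1⟩
        linarith
      rw [hEempty, if_neg (not_lt.2 hle)]
      simp
    · have hsub1 : Ioo t (X a) ⊆ E := by
        intro u hu
        exact ⟨hXmem a ha' u (lt_trans ht hu.1) hu.2, hu.1⟩
      have hsub2 : E ⊆ Ioc t (X a) := by
        intro u hu
        exact ⟨hu.2, hXub a ha' u ⟨lt_trans ht hu.2, hu.1⟩⟩
      have haeE : E =ᵐ[volume] Ioo t (X a) := by
        rw [MeasureTheory.ae_eq_set]
        constructor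
        · apply measure_mono_null (t := {X a})
          · intro u hu
            have h5 := hsub2 hu.1
            have h6 := hu.2
            simp only [mem_Ioo, not_and, not_lt] at h6
            have := h6 h5.1
            simp only [mem_singleton_iff]
            linarith [h5.2]
          · exact Real.volume_singleton
        · rw [diff_eq_empty.2 hsub1]
          exact measure_empty
      rw [setLIntegral_congr haeE, lint_B i hgt.le, if_pos hgt]
  -- the mass constraint
  have hfacpos : ∀ k : ℕ, (0:ℝ) < k.factorial := fun k => by exact_mod_cast k.factorial_pos
  have hconstr : ∫⁻ a in Ioi 0, ENNReal.ofReal ((X a)^(m+1)/((m+1).factorial : ℝ)) = 1 := by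
    set tn : ℕ → ℝ := fun n => 1/((n:ℝ)+1) with htndef
    have htnpos : ∀ n, 0 < tn n := fun n => by positivity
    have htn0 : Tendsto tn atTop (nhds 0) := tendsto_one_div_add_atTop_nhds_zero_nat
    have hψrep : ∀ n, ENNReal.ofReal (ψ (tn n))
        = ∫⁻ a in Ioi 0, (if tn n < X a then ENNReal.ofReal ((X a - tn n)^(m+1)/((m+1).factorial : ℝ)) else 0) := by
      intro n
      have h0 := hP m le_rfl (tn n) (htnpos n)
      rw [Nat.sub_self, hφψ] at h0
      rw [h0, hLC m (tn n) (htnpos n)]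
    have htnanti : ∀ n k : ℕ, n ≤ k → tn k ≤ tn n := by
      intro n k hnk
      apply one_div_le_one_div_of_le (by positivity)
      have : (n:ℝ) ≤ (k:ℝ) := Nat.cast_le.2 hnk
      linarith
    have hmono_fn : ∀ a : ℝ, Monotone (fun n => (if tn n < X a then ENNReal.ofReal ((X a - tn n)^(m+1)/((m+1).factorial : ℝ)) else 0)) := by
      intro a n k hnk
      dsimp only
      have htnk := htnanti n k hnk
      split_ifs with h1 h2 h2
      · apply ENNReal.ofReal_le_ofReal
        apply div_le_div_of_nonneg_right ?_ (hfacpos (m+1)).le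
        · exact pow_le_pow_left₀ (by linarith) (by linarith) (m+1)
      · exact absurd (lt_of_le_of_lt htnk h1) h2
      · exact zero_le
      · exact le_rfl
    have hsup_fn : ∀ a : ℝ, ⨆ n, (if tn n < X a then ENNReal.ofReal ((X a - tn n)^(m+1)/((m+1).factorial : ℝ)) else 0)
        = ENNReal.ofReal ((X a)^(m+1)/((m+1).factorial : ℝ)) := by
      intro a
      rcases eq_or_lt_of_le (hXnn a) with heq | hpos
      · have hall : ∀ n, ¬ (tn n < X a) := by
          intro n
          rw [← heq]
          exact not_lt.2 (htnpos n).le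
        simp only [hall, if_false]
        rw [← heq]
        simp [zero_pow (by omega : m + 1 ≠ 0)]
      · apply tendsto_nhds_unique (tendsto_atTop_iSup (hmono_fn a))
        have hev : ∀ᶠ n in atTop, tn n < X a := Tendsto.eventually_lt_const hpos htn0
        have h5 : Tendsto (fun n => ENNReal.ofReal ((X a - tn n)^(m+1)/((m+1).factorial : ℝ))) atTop
            (nhds (ENNReal.ofReal ((X a)^(m+1)/((m+1).factorial : ℝ)))) := by
          apply (ENNReal.continuous_ofReal.tendsto _).comp
          have h6 : Tendsto (fun n => X a - tn n) atTop (nhds (X a)) := by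
            have := (tendsto_const_nhds (x := X a) (f := atTop (α := ℕ))).sub htn0
            simpa using this
          exact (h6.pow (m+1)).div_const _
        apply Tendsto.congr' ?_ h5
        filter_upwards [hev] with n hn
        rw [if_pos hn]
    have hmeasfn : ∀ n, Measurable (fun a => (if tn n < X a then ENNReal.ofReal ((X a - tn n)^(m+1)/((m+1).factorial : ℝ)) else 0)) := by
      intro n
      apply Measurable.ite
      · exact measurableSet_lt measurable_const hXmeas
      · exact (((hXmeas.sub_const (tn n)).pow_const (m+1)).div_const _).ennreal_ofReal
      · exact measurable_const
    have hchain : ∫⁻ a in Ioi 0, ENNReal.ofReal ((X a)^(m+1)/((m+1).factorial : ℝ))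
        = ⨆ n, ENNReal.ofReal (ψ (tn n)) := by
      calc ∫⁻ a in Ioi 0, ENNReal.ofReal ((X a)^(m+1)/((m+1).factorial : ℝ))
          = ∫⁻ a in Ioi 0, ⨆ n, (if tn n < X a then ENNReal.ofReal ((X a - tn n)^(m+1)/((m+1).factorial : ℝ)) else 0) := by
            refine setLIntegral_congr_fun measurableSet_Ioi (fun a _ => ?_)
            rw [hsup_fn a]
        _ = ⨆ n, ∫⁻ a in Ioi 0, (if tn n < X a then ENNReal.ofReal ((X a - tn n)^(m+1)/((m+1).factorial : ℝ)) else 0) := by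
            apply lintegral_iSup hmeasfn
            intro n k hnk a
            exact hmono_fn a hnk
        _ = ⨆ n, ENNReal.ofReal (ψ (tn n)) := by
            congr 1
            funext n
            rw [← hψrep n]
    rw [hchain]
    have hmono2 : Monotone (fun n => ENNReal.ofReal (ψ (tn n))) := by
      intro n k hnk
      apply ENNReal.ofReal_le_ofReal
      exact hantiψ (htnpos k).le (htnpos n).le (htnanti n k hnk)
    have htendpsi : Tendsto (fun n => ENNReal.ofReal (ψ (tn n))) atTop (nhds 1) := by
      have h7 : Tendsto tn atTop (nhdsWithin 0 (Ici 0)) := by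
        rw [tendsto_nhdsWithin_iff]
        exact ⟨htn0, Filter.Eventually.of_forall (fun n => mem_Ici.2 (htnpos n).le)⟩
      have h8 : Tendsto (fun n => ψ (tn n)) atTop (nhds 1) := by
        have := (hcont 0 (self_mem_Ici)).tendsto.comp h7
        rwa [hψ0] at this
      have := (ENNReal.continuous_ofReal.tendsto _).comp h8
      simpa [Function.comp_def] using this
    exact tendsto_nhds_unique (tendsto_atTop_iSup hmono2) htendpsi
  -- the main lintegral bound
  have hQkey : ∫⁻ t in Ioi (0:ℝ), ENNReal.ofReal (t * (deriv ψ t)^2)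
      ≤ ENNReal.ofReal (((m:ℝ)+1) / (2*(2*(m:ℝ)+1))) := by
    rcases Nat.eq_zero_or_pos m with hm0 | hmpos
    · -- case d = 2
      have hφmψ : φ m = ψ := by rw [hm0]; exact hφψ
      have hrdeq : rderiv (φ m) = rderiv ψ := by rw [hφmψ]
      have hrrpos' : ∀ x : ℝ, 0 < x → rr x = -(rderiv ψ x) := fun x hx => by
        rw [hrrpos x hx, hrdeq]
      have hkey1 : ∀ t : ℝ, 0 < t → t * rr t ≤ 1 - ψ t := by
        intro t ht
        have hbound : ∀ a : ℝ, 0 < a → a < t → (t - a) * rr t ≤ 1 - ψ t := by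
          intro a ha hat
          have hF := hFTCh a t ha hat.le
          rw [hφmψ] at hF
          have hlow : (t - a) * rr t ≤ ∫ x in a..t, rr x := by
            have h5 : ∫ _x in a..t, rr t = (t - a) * rr t := by
              rw [intervalIntegral.integral_const]; simp [smul_eq_mul]
            rw [← h5]
            apply intervalIntegral.integral_mono_on hat.le intervalIntegrable_const
              (hrrint a t ha hat.le)
            intro x hx
            exact hrranti (mem_Ioi.2 (lt_of_lt_of_le ha hx.1)) (mem_Ioi.2 ht) hx.2
          have hψa : ψ a ≤ 1 := (hbounds a ha.le).2
          linarith
        have htl : Tendsto (fun a : ℝ => (t - a) * rr t) (nhdsWithin 0 (Ioi 0)) (nhds (t * rr t)) := by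
          have h6 : Tendsto (fun a : ℝ => (t - a) * rr t) (nhds 0) (nhds ((t - 0) * rr t)) :=
            ((tendsto_const_nhds.sub tendsto_id).mul tendsto_const_nhds)
          rw [sub_zero] at h6
          exact h6.mono_left nhdsWithin_le_nhds
        apply le_of_tendsto htl
        filter_upwards [Ioo_mem_nhdsGT ht] with a ha
        exact hbound a ha.1 ha.2
      have hmono_neg : MonotoneOn (fun x => -ψ x) (Ici 0) :=
        fun x hx y hy hxy => neg_le_neg (hantiψ hx hy hxy)
      have haed : ∀ᵐ t ∂(volume.restrict (Ioi (0:ℝ))),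
          ENNReal.ofReal (t * (deriv ψ t)^2) ≤ ENNReal.ofReal ((1 - ψ t) * rr t) := by
        have h1 := hmono_neg.ae_differentiableWithinAt_of_mem
        filter_upwards [ae_restrict_of_ae h1, ae_restrict_mem measurableSet_Ioi] with t hdiff' ht
        have ht0 : (0:ℝ) < t := ht
        have hdw : DifferentiableWithinAt ℝ ψ (Ici 0) t := by
          have h2 := (hdiff' (mem_Ici.2 ht0.le)).neg
          simpa using h2
        have hdat : DifferentiableAt ℝ ψ t := hdw.differentiableAt (Ici_mem_nhds ht0)
        have hderiv_eq : deriv ψ t = -(rr t) := by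
          have h2 : HasDerivWithinAt ψ (rderiv ψ t) (Ioi t) t := by
            have h2' := rderiv_hasDerivWithinAt hconvh' ht0
            rwa [hφmψ] at h2'
          have h3 : HasDerivWithinAt ψ (deriv ψ t) (Ioi t) t := hdat.hasDerivAt.hasDerivWithinAt
          have h4 := h2.derivWithin (uniqueDiffWithinAt_Ioi t)
          have h5 := h3.derivWithin (uniqueDiffWithinAt_Ioi t)
          rw [hrrpos' t ht0, neg_neg, ← h4, ← h5]
        rw [hderiv_eq]
        have h7 : t * (-(rr t))^2 = (t * rr t) * rr t := by ring
        rw [h7]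
        exact ENNReal.ofReal_le_ofReal (mul_le_mul_of_nonneg_right (hkey1 t ht0) (hrrnn t))
      set uu : ℝ → ℝ := fun t => if 0 < t then 1 - ψ t else 0 with huu
      have huunn : ∀ t, 0 ≤ uu t := by
        intro t
        simp only [huu]
        split_ifs with h1
        · have := (hbounds t h1.le).2; linarith
        · exact le_rfl
      have huumono : Monotone uu := by
        intro s t hst
        simp only [huu]
        split_ifs with h1 h2 h2
        · have := hantiψ (mem_Ici.2 h1.le) (mem_Ici.2 (lt_of_lt_of_le h1 hst).le) hst
          linarith
        · exact absurd (lt_of_lt_of_le h1 hst) h2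
        · have := (hbounds t h2.le).2; linarith
        · exact le_rfl
      have huumeas : Measurable uu := huumono.measurable
      have hQ2 : ∫⁻ t in Ioi (0:ℝ), ENNReal.ofReal ((1 - ψ t) * rr t) ≤ ENNReal.ofReal (1/2) := by
        have hcong : ∫⁻ t in Ioi (0:ℝ), ENNReal.ofReal ((1 - ψ t) * rr t)
            = ∫⁻ t in Ioi (0:ℝ), ENNReal.ofReal (uu t * rr t) := by
          refine setLIntegral_congr_fun measurableSet_Ioi (fun t ht => ?_)
          simp only [huu]; rw [if_pos (mem_Ioi.1 ht)]
        rw [hcong]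
        have hU : (⋃ n : ℕ, Ioc (1/((n:ℝ)+1)) ((n:ℝ)+1)) = Ioi (0:ℝ) := by
          ext x
          simp only [mem_iUnion, mem_Ioc, mem_Ioi]
          constructor
          · rintro ⟨n, h1, -⟩
            exact lt_trans (by positivity) h1
          · intro hx
            obtain ⟨n1, hn1⟩ := exists_nat_ge (1/x)
            obtain ⟨n2, hn2⟩ := exists_nat_ge x
            refine ⟨n1 + n2, ?_, ?_⟩
            · rw [div_lt_iff₀ (by positivity)]
              have h8 : (1:ℝ)/x ≤ n1 := hn1
              have h9 : (0:ℝ) ≤ n2 := Nat.cast_nonneg n2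
              have h10 : (1:ℝ) = x * (1/x) := by field_simp
              rw [h10]
              apply mul_lt_mul_of_pos_left ?_ hx
              push_cast
              linarith
            · have h9 : (0:ℝ) ≤ n1 := Nat.cast_nonneg n1
              push_cast
              linarith
        have hmonoS : Monotone (fun n : ℕ => Ioc (1/((n:ℝ)+1)) ((n:ℝ)+1)) := by
          intro n k hnk
          apply Ioc_subset_Ioc
          · apply one_div_le_one_div_of_le (by positivity)
            have : (n:ℝ) ≤ k := Nat.cast_le.2 hnk
            linarith
          · have : (n:ℝ) ≤ k := Nat.cast_le.2 hnk
            linarith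
        rw [← hU, lintegral_iUnion_sup ((huumeas.fun_mul hrrmeas).ennreal_ofReal) hmonoS
          (fun n => measurableSet_Ioc)]
        apply iSup_le
        intro n
        set an : ℝ := 1/((n:ℝ)+1) with han
        set bn : ℝ := ((n:ℝ)+1) with hbn
        have hanpos : 0 < an := by rw [han]; positivity
        have hanbn : an ≤ bn := by
          rw [han, hbn, div_le_iff₀ (by positivity)]
          nlinarith [(Nat.cast_nonneg n : (0:ℝ) ≤ (n:ℝ))]
        have hIccsub : Icc an bn ⊆ Ioi (0:ℝ) := fun x hx => mem_Ioi.2 (lt_of_lt_of_le hanpos hx.1)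
        have hcontψ' : ContinuousOn ψ (Ioi 0) := hcont.mono Ioi_subset_Ici_self
        have hwcont : ContinuousOn (fun y => (1 - ψ y) * (1 - ψ y) / 2) (Icc an bn) := by
          have hc : ContinuousOn (fun y => 1 - ψ y) (Icc an bn) :=
            continuousOn_const.sub (hcontψ'.mono hIccsub)
          exact (hc.mul hc).div_const 2
        have hwderiv : ∀ x ∈ Ioo an bn,
            HasDerivWithinAt (fun y => (1 - ψ y) * (1 - ψ y) / 2) ((1 - ψ x) * rr x) (Ioi x) x := by
          intro x hx
          have hx0 : (0:ℝ) < x := lt_trans hanpos hx.1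
          have h2 : HasDerivWithinAt ψ (rderiv ψ x) (Ioi x) x := by
            have h2' := rderiv_hasDerivWithinAt hconvh' hx0
            rwa [hφmψ] at h2'
          have h3 : HasDerivWithinAt (fun y => 1 - ψ y) (rr x) (Ioi x) x := by
            have h4 := h2.const_sub 1
            rw [hrrpos' x hx0]
            exact h4
          have h5 := (h3.mul h3).div_const 2
          refine h5.congr_deriv ?_
          ring
        have hintprod : IntervalIntegrable (fun x => (1 - ψ x) * rr x) volume an bn := by
          apply IntervalIntegrable.continuousOn_mul (hrrint an bn hanpos hanbn)
          rw [uIcc_of_le hanbn]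
          exact continuousOn_const.sub (hcontψ'.mono hIccsub)
        have hwFTC : ∫ x in an..bn, (1 - ψ x) * rr x
            = (1 - ψ bn) * (1 - ψ bn) / 2 - (1 - ψ an) * (1 - ψ an) / 2 :=
          intervalIntegral.integral_eq_sub_of_hasDeriv_right_of_le hanbn hwcont hwderiv hintprod
        have hub2 : ∫ x in an..bn, (1 - ψ x) * rr x ≤ 1/2 := by
          rw [hwFTC]
          have h6 := hbounds bn (mem_Ici.2 (le_of_lt (lt_of_lt_of_le hanpos hanbn)))
          nlinarith [h6.1, h6.2, sq_nonneg (1 - ψ an)]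
        have hcong2 : ∫⁻ t in Ioc an bn, ENNReal.ofReal (uu t * rr t)
            = ENNReal.ofReal (∫ x in an..bn, (1 - ψ x) * rr x) := by
          have hc3 : ∫ x in an..bn, (1 - ψ x) * rr x = ∫ x in an..bn, uu x * rr x := by
            apply intervalIntegral.integral_congr
            intro x hx
            rw [uIcc_of_le hanbn] at hx
            simp only [huu]; rw [if_pos (lt_of_lt_of_le hanpos hx.1)]
          rw [hc3, intervalIntegral.integral_of_le hanbn]
          rw [← MeasureTheory.ofReal_integral_eq_lintegral_ofReal]
          · have h11 : IntegrableOn (fun x => (1 - ψ x) * rr x) (Ioc an bn) volume :=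
              (intervalIntegrable_iff_integrableOn_Ioc_of_le hanbn).1 hintprod
            apply h11.congr_fun ?_ measurableSet_Ioc
            intro x hx
            simp only [huu]; rw [if_pos (lt_trans hanpos hx.1)]
          · exact (ae_restrict_iff' measurableSet_Ioc).2 (ae_of_all _ fun x _ =>
              mul_nonneg (huunn x) (hrrnn x))
        rw [hcong2]
        exact ENNReal.ofReal_le_ofReal hub2
      calc ∫⁻ t in Ioi (0:ℝ), ENNReal.ofReal (t * (deriv ψ t)^2)
          ≤ ∫⁻ t in Ioi (0:ℝ), ENNReal.ofReal ((1 - ψ t) * rr t) := lintegral_mono_ae haed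
        _ ≤ ENNReal.ofReal (1/2) := hQ2
        _ = ENNReal.ofReal (((m:ℝ)+1) / (2*(2*(m:ℝ)+1))) := by rw [hm0]; norm_num
    · -- case d ≥ 3
      have hm1 : 1 ≤ m := hmpos
      have hψ' : ∀ t : ℝ, 0 < t → deriv ψ t = -(φ 1 t) := by
        intro t ht
        have h1 := hL1 0 hm1 t ht
        rw [hφψ] at h1
        exact h1.deriv
      set κ : ℝ → ℝ → ENNReal := fun x t =>
        if t < x then ENNReal.ofReal ((x - t)^m / (m.factorial : ℝ)) else 0 with hκ
      have hΦ : ∀ t : ℝ, 0 < t → ENNReal.ofReal (φ 1 t) = ∫⁻ a in Ioi 0, κ (X a) t := by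
        intro t ht
        have h1 := hP (m-1) (by omega) t ht
        have h2 : m - (m-1) = 1 := by omega
        rw [h2] at h1
        rw [h1, hLC (m-1) t ht]
        have h3 : m - 1 + 1 = m := by omega
        rw [h3]
      set cR : ℝ := (2*(m:ℝ)+1)*(2*(m:ℝ)+2) with hcR
      have hcRpos : 0 < cR := by rw [hcR]; positivity
      have hsqpos : 0 < Real.sqrt cR := Real.sqrt_pos.2 hcRpos
      set c0 : ℝ := 1/((m.factorial : ℝ) * Real.sqrt cR) with hc0
      have hc0pos : 0 < c0 := by
        rw [hc0]
        apply div_pos one_pos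
        exact mul_pos (hfacpos m) hsqpos
      have hκmeas_t : ∀ z : ℝ, Measurable (fun t => κ z t) := by
        intro z
        apply Measurable.ite measurableSet_Iio ?_ measurable_const
        exact (((measurable_const.sub measurable_id).pow_const m).div_const _).ennreal_ofReal
      have hκmeas_a : ∀ t : ℝ, Measurable (fun a => κ (X a) t) := by
        intro t
        apply Measurable.ite ?_ ?_ measurable_const
        · exact measurableSet_lt measurable_const hXmeas
        · exact (((hXmeas.sub_const t).pow_const m).div_const _).ennreal_ofReal
      have hNsq : ∀ x : ℝ, 0 ≤ x →
          ∫⁻ t in Ioi (0:ℝ), ENNReal.ofReal t * (κ x t * κ x t)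
            = ENNReal.ofReal (x^(2*m+2) / (cR * (m.factorial:ℝ)^2)) := by
        intro x hx
        have hpt : ∀ t : ℝ, t ∈ Ioi (0:ℝ) → ENNReal.ofReal t * (κ x t * κ x t)
            = (if t < x then ENNReal.ofReal (t * (x-t)^(2*m) / ((m.factorial:ℝ)^2)) else 0) := by
          intro t ht
          have ht0 : (0:ℝ) < t := ht
          by_cases h : t < x
          · simp only [hκ, if_pos h]
            rw [← ENNReal.ofReal_mul (div_nonneg (pow_nonneg (by linarith) m) (hfacpos m).le)]
            rw [← ENNReal.ofReal_mul ht0.le]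
            congr 1
            rw [div_mul_div_comm, ← pow_add, ← two_mul, mul_div_assoc]
            congr 2
            rw [pow_two]
          · simp only [hκ, if_neg h, mul_zero, zero_mul]
        rw [setLIntegral_congr_fun measurableSet_Ioi hpt]
        rw [lint_chop (fun t => ENNReal.ofReal (t * (x-t)^(2*m) / ((m.factorial:ℝ)^2)))]
        have hfsq : (0:ℝ) < (m.factorial:ℝ)^2 := by positivity
        have hre : ∀ t : ℝ, t * (x-t)^(2*m) / ((m.factorial:ℝ)^2)
            = t * (x-t)^(2*m) / ((m.factorial:ℝ)^2) := fun t => rfl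
        rw [lint_T (2*m) hx hfsq]
        have harg : ((2*m:ℕ):ℝ)+1 = 2*(m:ℝ)+1 := by push_cast; ring
        have harg2 : ((2*m:ℕ):ℝ)+2 = 2*(m:ℝ)+2 := by push_cast; ring
        rw [harg, harg2, hcR, mul_assoc]
      have hsqrtNsq : ∀ x : ℝ, 0 ≤ x →
          (ENNReal.ofReal (x^(2*m+2) / (cR * (m.factorial:ℝ)^2))) ^ ((1:ℝ)/2)
            = ENNReal.ofReal (x^(m+1) * c0) := by
        intro x hx
        rw [ENNReal.ofReal_rpow_of_nonneg (by positivity) (by norm_num)]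
        congr 1
        rw [← Real.sqrt_eq_rpow]
        rw [Real.sqrt_div (by positivity) _]
        have h1 : x^(2*m+2) = (x^(m+1))^2 := by
          rw [← pow_mul]
          congr 1
          ring
        rw [h1, Real.sqrt_sq (by positivity)]
        rw [Real.sqrt_mul hcRpos.le, Real.sqrt_sq (hfacpos m).le]
        rw [hc0, mul_one_div, mul_comm (Real.sqrt cR) ((m.factorial:ℕ):ℝ)]
      have hCS : ∀ x y : ℝ, 0 ≤ x → 0 ≤ y →
          ∫⁻ t in Ioi (0:ℝ), ENNReal.ofReal t * (κ x t * κ y t)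
            ≤ ENNReal.ofReal (x^(m+1) * c0) * ENNReal.ofReal (y^(m+1) * c0) := by
        intro x y hx hy
        have hfm : Measurable (fun t => ENNReal.ofReal (Real.sqrt t) * κ x t) :=
          (Real.continuous_sqrt.measurable.ennreal_ofReal).mul (hκmeas_t x)
        have hgm : Measurable (fun t => ENNReal.ofReal (Real.sqrt t) * κ y t) :=
          (Real.continuous_sqrt.measurable.ennreal_ofReal).mul (hκmeas_t y)
        have hconj : Real.HolderConjugate 2 2 := Real.HolderConjugate.two_two
        have key := ENNReal.lintegral_mul_le_Lp_mul_Lq (volume.restrict (Ioi (0:ℝ))) hconj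
          hfm.aemeasurable hgm.aemeasurable
        have hL : ∫⁻ t in Ioi (0:ℝ),
            ((fun t => ENNReal.ofReal (Real.sqrt t) * κ x t) * (fun t => ENNReal.ofReal (Real.sqrt t) * κ y t)) t
            = ∫⁻ t in Ioi (0:ℝ), ENNReal.ofReal t * (κ x t * κ y t) := by
          apply lintegral_congr
          intro t
          simp only [Pi.mul_apply]
          rw [mul_mul_mul_comm, ofReal_sqrt_mul_self]
        have hrpow2 : ∀ w : ENNReal, w ^ (2:ℝ) = w * w := by
          intro w
          rw [show (2:ℝ) = ((2:ℕ):ℝ) by norm_num, ENNReal.rpow_natCast, pow_two]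
        have hsq : ∀ z : ℝ, 0 ≤ z →
            ∫⁻ t in Ioi (0:ℝ), (ENNReal.ofReal (Real.sqrt t) * κ z t) ^ (2:ℝ)
            = ENNReal.ofReal (z^(2*m+2) / (cR * (m.factorial:ℝ)^2)) := by
          intro z hz
          rw [← hNsq z hz]
          apply lintegral_congr
          intro t
          rw [ENNReal.mul_rpow_of_nonneg _ _ (by norm_num : (0:ℝ) ≤ 2)]
          rw [hrpow2, hrpow2, ofReal_sqrt_mul_self]
        rw [hsq x hx, hsq y hy, hsqrtNsq x hx, hsqrtNsq y hy] at key
        rw [← hL]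
        exact key
      set ν := volume.restrict (Ioi (0:ℝ)) with hν
      have hjoint : Measurable (Function.uncurry
          (fun (t : ℝ) (p : ℝ × ℝ) => ENNReal.ofReal t * (κ (X p.1) t * κ (X p.2) t))) := by
        apply Measurable.fun_mul
        · exact measurable_fst.ennreal_ofReal
        · apply Measurable.fun_mul
          · apply Measurable.ite
            · exact measurableSet_lt measurable_fst (hXmeas.comp (measurable_fst.comp measurable_snd))
            · exact ((((hXmeas.comp (measurable_fst.comp measurable_snd)).sub measurable_fst).pow_const m).div_const _).ennreal_ofReal
            · exact measurable_const
          · apply Measurable.ite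
            · exact measurableSet_lt measurable_fst (hXmeas.comp (measurable_snd.comp measurable_snd))
            · exact ((((hXmeas.comp (measurable_snd.comp measurable_snd)).sub measurable_fst).pow_const m).div_const _).ennreal_ofReal
            · exact measurable_const
      have hQ1 : ∫⁻ t in Ioi (0:ℝ), ENNReal.ofReal (t * (deriv ψ t)^2)
          = ∫⁻ t in Ioi (0:ℝ), ∫⁻ p : ℝ × ℝ, ENNReal.ofReal t * (κ (X p.1) t * κ (X p.2) t) ∂(ν.prod ν) := by
        refine setLIntegral_congr_fun measurableSet_Ioi (fun t ht => ?_)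
        have ht0 : (0:ℝ) < t := ht
        rw [hψ' t ht0]
        have h1 : t * (-(φ 1 t))^2 = t * ((φ 1 t) * (φ 1 t)) := by ring
        rw [h1]
        rw [ENNReal.ofReal_mul ht0.le, ENNReal.ofReal_mul (hsign 1 hm1 t ht0)]
        rw [hΦ t ht0]
        rw [← lintegral_prod_mul (hκmeas_a t).aemeasurable (hκmeas_a t).aemeasurable]
        exact (lintegral_const_mul' _ _ ENNReal.ofReal_ne_top).symm
      have hXκmeas : Measurable (fun a : ℝ => ENNReal.ofReal ((X a)^(m+1) * c0)) :=
        ((hXmeas.pow_const (m+1)).mul_const c0).ennreal_ofReal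
      have hsingle : ∫⁻ a in Ioi (0:ℝ), ENNReal.ofReal ((X a)^(m+1) * c0)
          = ENNReal.ofReal (c0 * (((m+1).factorial : ℕ) : ℝ)) := by
        have h1 : ∀ a : ℝ, ENNReal.ofReal ((X a)^(m+1) * c0)
            = ENNReal.ofReal (c0 * (((m+1).factorial : ℕ):ℝ))
              * ENNReal.ofReal ((X a)^(m+1)/(((m+1).factorial : ℕ):ℝ)) := by
          intro a
          rw [← ENNReal.ofReal_mul (by positivity)]
          congr 1
          have hfne : (((m+1).factorial : ℕ):ℝ) ≠ 0 := ne_of_gt (hfacpos (m+1))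
          field_simp
        simp_rw [h1]
        rw [lintegral_const_mul' _ _ ENNReal.ofReal_ne_top, hconstr, mul_one]
      calc ∫⁻ t in Ioi (0:ℝ), ENNReal.ofReal (t * (deriv ψ t)^2)
          = ∫⁻ p : ℝ × ℝ, (∫⁻ t in Ioi (0:ℝ), ENNReal.ofReal t * (κ (X p.1) t * κ (X p.2) t)) ∂(ν.prod ν) := by
            rw [hQ1]
            exact lintegral_lintegral_swap hjoint.aemeasurable
        _ ≤ ∫⁻ p : ℝ × ℝ, ENNReal.ofReal ((X p.1)^(m+1) * c0) * ENNReal.ofReal ((X p.2)^(m+1) * c0) ∂(ν.prod ν) :=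
            lintegral_mono (fun p => hCS (X p.1) (X p.2) (hXnn p.1) (hXnn p.2))
        _ = (∫⁻ a in Ioi (0:ℝ), ENNReal.ofReal ((X a)^(m+1) * c0))
              * (∫⁻ b in Ioi (0:ℝ), ENNReal.ofReal ((X b)^(m+1) * c0)) :=
            lintegral_prod_mul hXκmeas.aemeasurable hXκmeas.aemeasurable
        _ = ENNReal.ofReal (c0 * (((m+1).factorial : ℕ):ℝ)) * ENNReal.ofReal (c0 * (((m+1).factorial : ℕ):ℝ)) := by
            rw [hsingle]
        _ = ENNReal.ofReal (((m:ℝ)+1) / (2*(2*(m:ℝ)+1))) := by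
            rw [← ENNReal.ofReal_mul (by positivity)]
            congr 1
            have h2 : Real.sqrt cR ^ 2 = cR := Real.sq_sqrt hcRpos.le
            have h3 : (((m+1).factorial : ℕ) : ℝ) = ((m:ℝ)+1) * (m.factorial:ℝ) := by
              rw [Nat.factorial_succ]; push_cast; ring
            have hfne : (m.factorial:ℝ) ≠ 0 := ne_of_gt (hfacpos m)
            have hsne : Real.sqrt cR ≠ 0 := ne_of_gt hsqpos
            have hc0sq : c0 * c0 = 1/((m.factorial:ℝ)^2 * cR) := by
              rw [hc0]
              rw [div_mul_div_comm, one_mul]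
              congr 1
              have h4 : (m.factorial:ℝ) * Real.sqrt cR * ((m.factorial:ℝ) * Real.sqrt cR)
                  = (m.factorial:ℝ)^2 * (Real.sqrt cR)^2 := by ring
              rw [h4, h2]
            have h5 : (c0 * (((m+1).factorial : ℕ):ℝ)) * (c0 * (((m+1).factorial : ℕ):ℝ))
                = (c0 * c0) * ((((m+1).factorial : ℕ):ℝ) * (((m+1).factorial : ℕ):ℝ)) := by ring
            rw [h5, hc0sq, h3, hcR]
            have hm21 : (0:ℝ) < 2*(m:ℝ)+1 := by positivity
            have hm22 : (0:ℝ) < 2*(m:ℝ)+2 := by positivity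
            field_simp
  -- convert to the real-valued statement
  have hB : (0:ℝ) ≤ ((m:ℝ)+1) / (2*(2*(m:ℝ)+1)) := by positivity
  have hmeasI : Measurable (fun t : ℝ => t * (deriv ψ t)^2) :=
    measurable_id.mul ((measurable_deriv ψ).pow_const 2)
  have hnnI : 0 ≤ᵐ[volume.restrict (Ioi (0:ℝ))] (fun t : ℝ => t * (deriv ψ t)^2) :=
    (ae_restrict_iff' measurableSet_Ioi).2 (ae_of_all _ fun t ht => mul_nonneg (le_of_lt ht) (sq_nonneg _))
  have hIeq : ∫ t in Ioi (0:ℝ), t * (deriv ψ t)^2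
      = (∫⁻ t in Ioi (0:ℝ), ENNReal.ofReal (t * (deriv ψ t)^2)).toReal :=
    integral_eq_lintegral_of_nonneg_ae hnnI hmeasI.aestronglyMeasurable
  have hIle : ∫ t in Ioi (0:ℝ), t * (deriv ψ t)^2 ≤ ((m:ℝ)+1) / (2*(2*(m:ℝ)+1)) := by
    rw [hIeq]
    calc (∫⁻ t in Ioi (0:ℝ), ENNReal.ofReal (t * (deriv ψ t)^2)).toReal
        ≤ (ENNReal.ofReal (((m:ℝ)+1) / (2*(2*(m:ℝ)+1)))).toReal :=
          ENNReal.toReal_mono ENNReal.ofReal_ne_top hQkey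
      _ = ((m:ℝ)+1) / (2*(2*(m:ℝ)+1)) := ENNReal.toReal_ofReal hB
  have h2m : 2*(d:ℝ) - 3 = 2*(m:ℝ)+1 := by rw [hdcast]; ring
  have h2mpos : (0:ℝ) < 2*(m:ℝ)+1 := by positivity
  have harith : 1 - 4 * (((m:ℝ)+1) / (2*(2*(m:ℝ)+1))) = -1/(2*(m:ℝ)+1) := by
    field_simp
    ring
  rw [h2m]
  linarith [hIle, harith]

end Stmt17Aux

/-- Kendall's tau of the bivariate margin of a `d`-dimensional Archimedean copula,
given by `τ = 1 - 4 ∫₀^∞ t (ψ'(t))² dt`, is at least `-1/(2d-3)`, with equality for the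
lower-bound generator `ψ_d^L(x) = (1-x)₊^(d-1)`. -/
theorem stmt17 (d : ℕ) (hd : 2 ≤ d) (ψ : ℝ → ℝ) (hψ : IsArchGen ψ)
    (hmon : DMonotoneOn d ψ) :
    (-1 / (2*(d:ℝ) - 3) ≤ 1 - 4 * ∫ t in Set.Ioi (0:ℝ), t * (deriv ψ t) ^ 2) ∧
    1 - 4 * (∫ t in Set.Ioi (0:ℝ),
        t * (deriv (fun x : ℝ => max (1 - x) 0 ^ (d - 1)) t) ^ 2)
      = -1 / (2*(d:ℝ) - 3) :=
  ⟨Stmt17Aux.ineq_part d hd ψ hψ hmon, Stmt17Aux.eq_part d hd⟩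
end
end

section
/- Let ψ be a d-monotone Archimedean generator with d ≥ 3, and let f(x) = 1 - ψ(x)^{1/(d-1)}. Then f is concave on (0, ψ⁻¹(0)). Consequently, the d-dimensional Archimedean copula C generated by ψ dominates the copula C_d^L generated by ψ_d^L(x) = (1-x)₊^{d-1} pointwise: C_d^L(u) ≤ C(u) for all u ∈ [0,1]^d. -/
open Set MeasureTheory ProbabilityTheory Filter

noncomputable section

namespace Stmt19Aux

open Topology

/-- Steklov averaging operator. -/
def Av (ε : ℝ) (g : ℝ → ℝ) (x : ℝ) : ℝ := (∫ t in x..(x + ε), g t) / ε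

lemma contOn_of_hasDerivAt {g g' : ℝ → ℝ} (h : ∀ x ∈ Ioi (0:ℝ), HasDerivAt g (g' x) x) :
    ContinuousOn g (Ioi 0) := fun x hx => ((h x hx).continuousAt).continuousWithinAt

lemma II_of_contOn {g : ℝ → ℝ} (hg : ContinuousOn g (Ioi 0))
    {x y : ℝ} (hx : 0 < x) (hy : 0 < y) : IntervalIntegrable g volume x y :=
  (hg.mono (fun t ht => lt_of_lt_of_le (lt_min hx hy) ht.1)).intervalIntegrable

lemma Av_hasDerivAt {ε : ℝ} (hε : 0 < ε) {g : ℝ → ℝ} (hg : ContinuousOn g (Ioi 0)) {x : ℝ}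
    (hx : 0 < x) : HasDerivAt (Av ε g) ((g (x + ε) - g x) / ε) x := by
  have hW : ∀ y : ℝ, 0 < y → HasDerivAt (fun u => ∫ t in (x/2)..u, g t) (g y) y := by
    intro y hy
    refine intervalIntegral.integral_hasDerivAt_right (II_of_contOn hg (by linarith) hy) ?_ ?_
    · exact (hg.stronglyMeasurableAtFilter isOpen_Ioi) y hy
    · exact hg.continuousAt (Ioi_mem_nhds hy)
  have h1 : HasDerivAt (fun y => ∫ t in (x/2)..(y + ε), g t) (g (x + ε)) x := by
    have := (hW (x + ε) (by linarith)).comp x ((hasDerivAt_id x).add_const ε)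
    rw [mul_one] at this; exact this
  have h2 := hW x hx
  have h3 := (h1.sub h2).div_const ε
  refine h3.congr_of_eventuallyEq ?_
  have hev : ∀ᶠ y in 𝓝 x, x/2 < y := eventually_gt_nhds (by linarith)
  filter_upwards [hev] with y hy
  have hy0 : 0 < y := by linarith
  have hadd : (∫ t in (x/2)..y, g t) + (∫ t in y..(y + ε), g t) = ∫ t in (x/2)..(y + ε), g t :=
    intervalIntegral.integral_add_adjacent_intervals (II_of_contOn hg (by linarith) hy0)
      (II_of_contOn hg hy0 (by linarith))
  simp only [Av, Pi.sub_apply]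
  rw [← hadd]
  ring

lemma Av_eq_of_deriv {ε : ℝ} (hε : 0 < ε) {g g' : ℝ → ℝ} (hg' : ContinuousOn g' (Ioi 0))
    (hgd : ∀ x ∈ Ioi (0:ℝ), HasDerivAt g (g' x) x) {x : ℝ} (hx : 0 < x) :
    (g (x + ε) - g x) / ε = Av ε g' x := by
  have h : ∫ t in x..(x + ε), g' t = g (x + ε) - g x := by
    refine intervalIntegral.integral_eq_sub_of_hasDerivAt (fun t ht => hgd t ?_)
      (II_of_contOn hg' hx (by linarith))
    have : (0:ℝ) < min x (x + ε) := lt_min hx (by linarith)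
    exact lt_of_lt_of_le this ht.1
  rw [Av, h]

lemma Av_hasDerivAt' {ε : ℝ} (hε : 0 < ε) {g g' : ℝ → ℝ} (hg' : ContinuousOn g' (Ioi 0))
    (hgd : ∀ x ∈ Ioi (0:ℝ), HasDerivAt g (-(g' x)) x) {x : ℝ} (hx : 0 < x) :
    HasDerivAt (Av ε g) (-(Av ε g' x)) x := by
  have hg : ContinuousOn g (Ioi 0) := contOn_of_hasDerivAt hgd
  have h := Av_hasDerivAt hε hg hx
  have h2 : (g (x + ε) - g x) / ε = Av ε (fun t => -(g' t)) x :=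
    Av_eq_of_deriv hε hg'.neg hgd hx
  have h3 : Av ε (fun t => -(g' t)) x = -(Av ε g' x) := by
    simp [Av, intervalIntegral.integral_neg, neg_div]
  rw [h2, h3] at h
  exact h

lemma Av_nonneg {ε : ℝ} (hε : 0 < ε) {g : ℝ → ℝ} (hg : ∀ t ∈ Ioi (0:ℝ), 0 ≤ g t) {x : ℝ}
    (hx : 0 < x) : 0 ≤ Av ε g x :=
  div_nonneg (intervalIntegral.integral_nonneg (by linarith)
    (fun u hu => hg u (lt_of_lt_of_le hx hu.1))) hε.le

lemma Av_le {ε : ℝ} (hε : 0 < ε) {g : ℝ → ℝ} (hg : ContinuousOn g (Ioi 0))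
    (hganti : AntitoneOn g (Ioi 0)) {x : ℝ} (hx : 0 < x) : Av ε g x ≤ g x := by
  have h1 : (∫ t in x..(x + ε), g t) ≤ ∫ _t in x..(x + ε), g x := by
    refine intervalIntegral.integral_mono_on (by linarith) (II_of_contOn hg hx (by linarith))
      intervalIntegrable_const (fun t ht => hganti hx (lt_of_lt_of_le hx ht.1) ht.1)
  have h2 : (∫ _t in x..(x + ε), g x) = ε * g x := by
    rw [intervalIntegral.integral_const, smul_eq_mul]; ring
  rw [Av, div_le_iff₀ hε]
  rw [h2] at h1; linarith [h1]

lemma le_Av {ε : ℝ} (hε : 0 < ε) {g : ℝ → ℝ} (hg : ContinuousOn g (Ioi 0))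
    (hganti : AntitoneOn g (Ioi 0)) {x : ℝ} (hx : 0 < x) : g (x + ε) ≤ Av ε g x := by
  have h1 : (∫ _t in x..(x + ε), g (x + ε)) ≤ ∫ t in x..(x + ε), g t := by
    refine intervalIntegral.integral_mono_on (by linarith) intervalIntegrable_const
      (II_of_contOn hg hx (by linarith))
      (fun t ht => hganti (lt_of_lt_of_le hx ht.1) (by simp only [mem_Ioi]; linarith) ht.2)
  have h2 : (∫ _t in x..(x + ε), g (x + ε)) = ε * g (x + ε) := by
    rw [intervalIntegral.integral_const, smul_eq_mul]; ring
  rw [Av, le_div_iff₀ hε]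
  rw [h2] at h1; linarith [h1]

lemma Av_tendsto {ε : ℝ} (hε : 0 < ε) {g : ℝ → ℝ} (hg : ContinuousOn g (Ioi 0))
    (hganti : AntitoneOn g (Ioi 0)) (hg0 : ∀ t ∈ Ioi (0:ℝ), 0 ≤ g t)
    (hgl : Tendsto g atTop (𝓝 0)) : Tendsto (Av ε g) atTop (𝓝 0) := by
  refine tendsto_of_tendsto_of_tendsto_of_le_of_le' tendsto_const_nhds hgl ?_ ?_
  · filter_upwards [eventually_gt_atTop (0:ℝ)] with x hx
    exact Av_nonneg hε hg0 hx
  · filter_upwards [eventually_gt_atTop (0:ℝ)] with x hx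
    exact Av_le hε hg hganti hx

lemma convexOn_increments {G : ℝ → ℝ} (hG : ConvexOn ℝ (Ioi 0) G) {a b c : ℝ}
    (ha : 0 < a) (hab : a ≤ b) (hc : 0 ≤ c) : G (a + c) + G b ≤ G a + G (b + c) := by
  rcases eq_or_lt_of_le hc with hc0 | hc0
  · rw [← hc0]; simp
  have hs : 0 < b + c - a := by linarith
  set t := c / (b + c - a) with ht
  have ht0 : 0 < t := div_pos hc0 hs
  have ht1 : t ≤ 1 := by rw [div_le_one hs]; linarith
  have e1 : a + c = (1 - t) • a + t • (b + c) := by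
    simp only [smul_eq_mul, ht]; field_simp; ring
  have e2 : b = t • a + (1 - t) • (b + c) := by
    simp only [smul_eq_mul, ht]; field_simp; ring
  have i1 := hG.2 (mem_Ioi.2 ha) (mem_Ioi.2 (by linarith : (0:ℝ) < b + c))
    (by linarith : (0:ℝ) ≤ 1 - t) ht0.le (by ring)
  have i2 := hG.2 (mem_Ioi.2 ha) (mem_Ioi.2 (by linarith : (0:ℝ) < b + c))
    ht0.le (by linarith : (0:ℝ) ≤ 1 - t) (by ring)
  rw [← e1] at i1
  rw [← e2] at i2
  simp only [smul_eq_mul] at i1 i2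
  linarith


lemma step (m : ℕ) (hm : 1 ≤ m) (φ φ' φ'' Φ : ℝ → ℝ)
    (hΦd : ∀ x ∈ Ioi (0:ℝ), HasDerivAt Φ (-(φ x)) x)
    (hΦ0 : ∀ x ∈ Ioi (0:ℝ), 0 ≤ Φ x)
    (hφd : ∀ x ∈ Ioi (0:ℝ), HasDerivAt φ (φ' x) x)
    (hφd' : ∀ x ∈ Ioi (0:ℝ), HasDerivAt φ' (φ'' x) x)
    (hφ0 : ∀ x ∈ Ioi (0:ℝ), 0 ≤ φ x)
    (hφ'0 : ∀ x ∈ Ioi (0:ℝ), φ' x ≤ 0)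
    (hφ''0 : ∀ x ∈ Ioi (0:ℝ), 0 ≤ φ'' x)
    (hlim : Tendsto φ atTop (𝓝 0))
    (hQ : ∀ x ∈ Ioi (0:ℝ), ((m:ℝ) - 1) * (φ' x)^2 ≤ (m:ℝ) * (φ'' x * φ x)) :
    ∀ x ∈ Ioi (0:ℝ), (m:ℝ) * (φ x)^2 ≤ ((m:ℝ) + 1) * ((-(φ' x)) * Φ x) := by
  intro x hx
  have hx0 : (0:ℝ) < x := hx
  have hφcont : ContinuousOn φ (Ioi 0) := fun t ht => ((hφd t ht).continuousAt).continuousWithinAt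
  have hm0 : (0:ℝ) < m := by exact_mod_cast hm
  rcases eq_or_lt_of_le (hφ0 x hx) with hA | hA
  · have h1 : (0:ℝ) ≤ (-(φ' x)) * Φ x := mul_nonneg (by linarith [hφ'0 x hx]) (hΦ0 x hx)
    rw [← hA]
    nlinarith
  have hB : φ' x < 0 := by
    rcases lt_or_eq_of_le (hφ'0 x hx) with h | h
    · exact h
    exfalso
    have hsub : Ici x ⊆ Ioi (0:ℝ) := fun t ht => lt_of_lt_of_le hx0 ht
    have hintsub : interior (Ici x) ⊆ Ioi (0:ℝ) := fun t ht => hsub (interior_subset ht)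
    have hmono' : MonotoneOn φ' (Ici x) := by
      refine monotoneOn_of_deriv_nonneg (convex_Ici x)
        (fun t ht => ((hφd' t (hsub ht)).continuousAt).continuousWithinAt)
        (fun t ht => ((hφd' t (hintsub ht)).differentiableAt).differentiableWithinAt) ?_
      intro t ht
      rw [(hφd' t (hintsub ht)).deriv]
      exact hφ''0 t (hintsub ht)
    have hφ'zero : ∀ t ∈ Ici x, φ' t = 0 := by
      intro t ht
      have h1 : φ' x ≤ φ' t := hmono' self_mem_Ici ht ht
      have h2 : φ' t ≤ 0 := hφ'0 t (hsub ht)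
      rw [h] at h1
      linarith
    have hconst : ∀ t ∈ Ici x, φ t = φ x := by
      intro t ht
      have hmφ : MonotoneOn φ (Ici x) := by
        refine monotoneOn_of_deriv_nonneg (convex_Ici x)
          (fun s hs => ((hφd s (hsub hs)).continuousAt).continuousWithinAt)
          (fun s hs => ((hφd s (hintsub hs)).differentiableAt).differentiableWithinAt) ?_
        intro s hs
        rw [(hφd s (hintsub hs)).deriv, hφ'zero s (interior_subset hs)]
      have haφ : AntitoneOn φ (Ici x) := by
        refine antitoneOn_of_deriv_nonpos (convex_Ici x)
          (fun s hs => ((hφd s (hsub hs)).continuousAt).continuousWithinAt)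
          (fun s hs => ((hφd s (hintsub hs)).differentiableAt).differentiableWithinAt) ?_
        intro s hs
        rw [(hφd s (hintsub hs)).deriv]
        exact hφ'0 s (hintsub hs)
      exact le_antisymm (haφ self_mem_Ici ht ht) (hmφ self_mem_Ici ht ht)
    have hev : ∀ᶠ t in atTop, φ t < φ x := hlim.eventually_lt_const hA
    rcases (hev.and (eventually_ge_atTop x)).exists with ⟨t, ht1, ht2⟩
    rw [hconst t ht2] at ht1
    exact lt_irrefl _ ht1
  -- main case
  set c : ℝ := (m:ℝ)⁻¹ with hcdef
  have hc0 : 0 < c := by positivity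
  have hcm : c * m = 1 := by rw [hcdef]; field_simp
  set A := φ x with hAdef
  set B := -(φ' x) with hBdef
  have hBpos : 0 < B := by rw [hBdef]; linarith
  set u := A ^ (c - 1) with hudef
  have hu0 : 0 < u := Real.rpow_pos_of_pos hA _
  have hAc : A ^ c = u * A := by
    rw [hudef, ← Real.rpow_add_one (ne_of_gt hA) (c - 1)]
    norm_num
  have hAcpos : 0 < A ^ c := Real.rpow_pos_of_pos hA _
  set slope := φ' x * c * A ^ (c - 1) with hslopedef
  have hslope : slope = -(B * c * u) := by rw [hslopedef, hudef, hBdef]; ring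
  have hslope_neg : slope < 0 := by rw [hslope]; simp only [neg_neg, neg_lt, neg_zero]; positivity
  set T := (m:ℝ) * A / B with hTdef
  have hT : 0 < T := by rw [hTdef]; positivity
  set l : ℝ → ℝ := fun t => A ^ c + slope * (t - x) with hldef
  have hlx : l x = A ^ c := by simp [hldef]
  have hslT : slope * T = -(A ^ c) := by
    rw [hslope, hTdef, hAc, hcdef]
    field_simp
  have hlxT : l (x + T) = 0 := by
    simp only [hldef, add_sub_cancel_left]
    rw [hslT]; ring
  -- tangent bound
  have htan : ∀ t, x < t → (∀ s ∈ Icc x t, 0 < φ s) → l t ≤ φ t ^ c := by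
    intro t hxt hpos
    have hsub : Icc x t ⊆ Ioi (0:ℝ) := fun s hs => lt_of_lt_of_le hx0 hs.1
    set hd : ℝ → ℝ := fun s => φ' s * c * φ s ^ (c - 1) with hhddef
    have hhd : ∀ s ∈ Icc x t, HasDerivAt (fun r => φ r ^ c) (hd s) s := fun s hs =>
      (hφd s (hsub hs)).rpow_const (Or.inl (ne_of_gt (hpos s hs)))
    have hdd : ∀ s ∈ Icc x t, HasDerivAt hd
        (φ'' s * c * φ s ^ (c - 1) + (φ' s * c) * ((φ' s) * (c - 1) * φ s ^ (c - 1 - 1))) s := by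
      intro s hs
      have h1 : HasDerivAt (fun r => φ r ^ (c - 1)) ((φ' s) * (c - 1) * φ s ^ (c - 1 - 1)) s :=
        (hφd s (hsub hs)).rpow_const (Or.inl (ne_of_gt (hpos s hs)))
      have h2 : HasDerivAt (fun r => φ' r * c) (φ'' s * c) s := (hφd' s (hsub hs)).mul_const c
      exact h2.mul h1
    have hd_mono : MonotoneOn hd (Icc x t) := by
      refine monotoneOn_of_deriv_nonneg (convex_Icc x t)
        (fun s hs => ((hdd s hs).continuousAt).continuousWithinAt)
        (fun s hs => ((hdd s (interior_subset hs)).differentiableAt).differentiableWithinAt) ?_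
      intro s hs
      have hsmem := interior_subset hs
      rw [(hdd s hsmem).deriv]
      have hφs : 0 < φ s := hpos s hsmem
      have e1 : φ s ^ (c - 1) = φ s ^ (c - 1 - 1) * φ s := by
        rw [← Real.rpow_add_one (ne_of_gt hφs) (c - 1 - 1)]
        norm_num
      have hp2 : (0:ℝ) ≤ φ s ^ (c - 1 - 1) := (Real.rpow_pos_of_pos hφs _).le
      have hq := hQ s (hsub hsmem)
      have hq' : (1 - c) * (φ' s)^2 ≤ φ'' s * φ s := by
        have h3 : c * (((m:ℝ) - 1) * (φ' s)^2) ≤ c * ((m:ℝ) * (φ'' s * φ s)) :=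
          mul_le_mul_of_nonneg_left hq hc0.le
        have e2 : c * (((m:ℝ) - 1) * (φ' s)^2) = (1 - c) * (φ' s)^2 := by
          rw [hcdef]; field_simp; try ring
        have e3 : c * ((m:ℝ) * (φ'' s * φ s)) = φ'' s * φ s := by
          rw [hcdef]
          field_simp
        rw [e2, e3] at h3; exact h3
      have goal_eq : φ'' s * c * φ s ^ (c - 1) + (φ' s * c) * ((φ' s) * (c - 1) * φ s ^ (c - 1 - 1))
          = c * (φ s ^ (c - 1 - 1)) * (φ'' s * φ s - (1 - c) * (φ' s)^2) := by
        rw [e1]; ring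
      rw [goal_eq]
      have h4 : 0 ≤ φ'' s * φ s - (1 - c) * (φ' s)^2 := by linarith
      positivity
    have hld : ∀ s : ℝ, HasDerivAt l slope s := by
      intro s
      have h5 : HasDerivAt (fun r => A ^ c + slope * (r - x)) (slope * 1) s :=
        (((hasDerivAt_id s).sub_const x).const_mul slope).const_add (A ^ c)
      simpa [hldef] using h5
    have hw : MonotoneOn (fun s => φ s ^ c - l s) (Icc x t) := by
      refine monotoneOn_of_deriv_nonneg (convex_Icc x t)
        (fun s hs => (((hhd s hs).sub (hld s)).continuousAt).continuousWithinAt)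
        (fun s hs => (((hhd s (interior_subset hs)).sub (hld s)).differentiableAt).differentiableWithinAt) ?_
      intro s hs
      have hsmem := interior_subset hs
      rw [show deriv (fun s => φ s ^ c - l s) s = _ from ((hhd s hsmem).sub (hld s)).deriv]
      have hdx : hd x = slope := by
        simp only [hhddef, hslopedef, hAdef]
      have hxmem : x ∈ Icc x t := left_mem_Icc.2 hxt.le
      have h6 := hd_mono hxmem hsmem hsmem.1
      rw [hdx] at h6
      linarith
    have hxmem : x ∈ Icc x t := left_mem_Icc.2 hxt.le
    have htmem : t ∈ Icc x t := right_mem_Icc.2 hxt.le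
    have h7 := hw hxmem htmem hxt.le
    dsimp only at h7
    rw [hlx, ← hAdef] at h7
    linarith
  -- pointwise bound on [x, x+T]
  have hCL : ∀ t ∈ Icc x (x + T), (l t) ^ m ≤ φ t := by
    intro t ht
    rcases eq_or_lt_of_le ht.1 with rfl | hxt
    · rw [hlx, ← Real.rpow_natCast (A ^ c) m, ← Real.rpow_mul hA.le, hcm, Real.rpow_one, hAdef]
    have hl_nonneg : 0 ≤ l t := by
      have h8 : l (x + T) ≤ l t := by
        simp only [hldef, add_sub_cancel_left]
        nlinarith [ht.2, hslope_neg]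
      rw [hlxT] at h8; linarith
    by_cases hpos : ∀ s ∈ Icc x t, 0 < φ s
    · have h1 : l t ≤ φ t ^ c := htan t hxt hpos
      have h2 : (l t) ^ m ≤ (φ t ^ c) ^ m := pow_le_pow_left₀ hl_nonneg h1 m
      have h3 : (φ t ^ c) ^ m = φ t := by
        rw [← Real.rpow_natCast (φ t ^ c) m, ← Real.rpow_mul (hφ0 t (lt_trans hx0 hxt)),
          hcm, Real.rpow_one]
      rw [h3] at h2; exact h2
    · push_neg at hpos
      obtain ⟨s₀, hs₀mem, hs₀⟩ := hpos
      have hsub : Icc x t ⊆ Ioi (0:ℝ) := fun s hs => lt_of_lt_of_le hx0 hs.1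
      set E := Icc x t ∩ φ ⁻¹' (Iic 0) with hEdef
      have hEcl : IsClosed E :=
        (hφcont.mono hsub).preimage_isClosed_of_isClosed isClosed_Icc isClosed_Iic
      have hEne : E.Nonempty := ⟨s₀, hs₀mem, hs₀⟩
      have hEbdd : BddBelow E := ⟨x, fun s hs => hs.1.1⟩
      set s₁ := sInf E with hs₁def
      have hs₁E : s₁ ∈ E := hEcl.csInf_mem hEne hEbdd
      have hφs₁ : φ s₁ = 0 := le_antisymm hs₁E.2 (hφ0 s₁ (hsub hs₁E.1))
      have hs₁x : x < s₁ := by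
        rcases eq_or_lt_of_le hs₁E.1.1 with h | h
        · exfalso
          rw [hAdef] at hA
          rw [← h] at hφs₁
          rw [hφs₁] at hA
          exact lt_irrefl _ hA
        · exact h
      have hpos' : ∀ r, x < r → r < s₁ → ∀ s ∈ Icc x r, 0 < φ s := by
        intro r hxr hrs s hs
        rcases lt_or_ge 0 (φ s) with h | h
        · exact h
        exfalso
        have hsE : s ∈ E := ⟨⟨hs.1, le_trans hs.2 (le_trans hrs.le hs₁E.1.2)⟩, h⟩
        have h9 := csInf_le hEbdd hsE
        rw [← hs₁def] at h9
        linarith [hs.2]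
      have hls₁ : l s₁ ≤ 0 := by
        have hev : ∀ᶠ r in 𝓝[<] s₁, l r ≤ φ r ^ c := by
          filter_upwards [Ioo_mem_nhdsLT_of_mem (⟨hs₁x, le_refl s₁⟩ : s₁ ∈ Ioc x s₁)] with r hr
          exact htan r hr.1 (hpos' r hr.1 hr.2)
        have hlcont : Tendsto l (𝓝[<] s₁) (𝓝 (l s₁)) := by
          have hcl : Continuous l := by
            simp only [hldef]; fun_prop
          exact (hcl.tendsto s₁).mono_left nhdsWithin_le_nhds
        have hφc : Tendsto (fun r => φ r ^ c) (𝓝[<] s₁) (𝓝 0) := by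
          have h1 : ContinuousAt φ s₁ := (hφd s₁ (hsub hs₁E.1)).continuousAt
          have h2 : ContinuousAt (fun y : ℝ => y ^ c) (φ s₁) :=
            Real.continuousAt_rpow_const _ _ (Or.inr hc0.le)
          have h3 : ContinuousAt (fun r => φ r ^ c) s₁ := h2.comp h1
          have h4 := (h3.tendsto).mono_left (nhdsWithin_le_nhds (s := Iio s₁))
          rw [hφs₁, Real.zero_rpow (ne_of_gt hc0)] at h4
          exact h4
        have : NeBot (𝓝[<] s₁) := nhdsLT_neBot s₁
        exact le_of_tendsto_of_tendsto hlcont hφc hev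
      have hlt0 : l t ≤ 0 := by
        have h10 : l t ≤ l s₁ := by
          simp only [hldef]
          nlinarith [hs₁E.1.2, hslope_neg]
        linarith
      have hlt : l t = 0 := le_antisymm hlt0 hl_nonneg
      rw [hlt, zero_pow (by omega : m ≠ 0)]
      exact hφ0 t (lt_trans hx0 hxt)
  -- integral comparison
  have hl_cont : Continuous l := by simp only [hldef]; fun_prop
  have hIImono : (∫ s in x..(x + T), (l s) ^ m) ≤ ∫ s in x..(x + T), φ s := by
    refine intervalIntegral.integral_mono_on (by linarith) ?_
      (II_of_contOn hφcont hx0 (by linarith)) ?_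
    · exact ((hl_cont.pow m).intervalIntegrable x (x + T))
    · exact fun s hs => hCL s hs
  have hFTCΦ : (∫ s in x..(x + T), φ s) = Φ x - Φ (x + T) := by
    have h1 : (∫ s in x..(x + T), -(φ s)) = Φ (x + T) - Φ x := by
      refine intervalIntegral.integral_eq_sub_of_hasDerivAt (fun s hs => hΦd s ?_)
        ((II_of_contOn hφcont hx0 (by linarith)).neg)
      rw [uIcc_of_le (by linarith : x ≤ x + T)] at hs
      exact lt_of_lt_of_le hx0 hs.1
    rw [intervalIntegral.integral_neg] at h1
    linarith
  have hFTCl : (∫ s in x..(x + T), (l s) ^ m) = (m:ℝ) * A^2 / (((m:ℝ) + 1) * B) := by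
    have hld : ∀ s : ℝ, HasDerivAt l slope s := by
      intro s
      have h5 : HasDerivAt (fun r => A ^ c + slope * (r - x)) (slope * 1) s :=
        (((hasDerivAt_id s).sub_const x).const_mul slope).const_add (A ^ c)
      simpa [hldef] using h5
    have hFl : ∀ s : ℝ, HasDerivAt (fun r => (l r) ^ (m + 1) / (((m:ℝ) + 1) * slope)) ((l s) ^ m) s := by
      intro s
      have h1 := ((hld s).pow (m + 1)).div_const (((m:ℝ) + 1) * slope)
      refine h1.congr_deriv ?_
      have hsne : slope ≠ 0 := ne_of_lt hslope_neg
      have h2 : (↑(m + 1) * l s ^ (m + 1 - 1) * slope) / (((m:ℝ) + 1) * slope) = l s ^ m := by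
        push_cast
        field_simp
      rw [h2]
    have h2 : (∫ s in x..(x + T), (l s) ^ m)
        = (l (x + T)) ^ (m + 1) / (((m:ℝ) + 1) * slope)
          - (l x) ^ (m + 1) / (((m:ℝ) + 1) * slope) := by
      refine intervalIntegral.integral_eq_sub_of_hasDerivAt (fun s _ => hFl s) ?_
      exact ((hl_cont.pow m).intervalIntegrable x (x + T))
    rw [h2, hlxT, hlx, zero_pow (by omega : m + 1 ≠ 0)]
    have e4 : (A ^ c) ^ (m + 1) = u * A^2 := by
      rw [← Real.rpow_natCast (A ^ c) (m + 1), ← Real.rpow_mul hA.le]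
      have e5 : c * ((m + 1 : ℕ):ℝ) = 1 + c := by
        push_cast
        rw [hcdef]
        field_simp
      rw [e5, Real.rpow_add hA, Real.rpow_one, hAc]
      ring
    rw [e4, hslope, hcdef]
    have hmne : (m:ℝ) ≠ 0 := ne_of_gt hm0
    field_simp
    ring
  -- conclusion
  have hΦT : 0 ≤ Φ (x + T) := hΦ0 _ (by simp only [mem_Ioi]; linarith)
  have hΦx : (m:ℝ) * A^2 / (((m:ℝ) + 1) * B) ≤ Φ x := by
    rw [← hFTCl]
    rw [hFTCΦ] at hIImono
    linarith
  rw [div_le_iff₀ (by positivity : (0:ℝ) < ((m:ℝ) + 1) * B)] at hΦx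
  have hring : Φ x * (((m:ℝ) + 1) * B) = ((m:ℝ) + 1) * (B * Φ x) := by ring
  linarith

lemma key (d : ℕ) (hd : 3 ≤ d) (P : ℕ → ℝ → ℝ)
    (hder : ∀ k, k ≤ d - 1 → ∀ x ∈ Ioi (0:ℝ), HasDerivAt (P k) (-(P (k+1) x)) x)
    (hpos : ∀ k, k ≤ d → ∀ x ∈ Ioi (0:ℝ), 0 ≤ P k x)
    (hlim : ∀ k, 1 ≤ k → k ≤ d - 2 → Tendsto (P k) atTop (𝓝 0)) :
    ∀ x ∈ Ioi (0:ℝ), ((d:ℝ) - 2) * (P 1 x)^2 ≤ ((d:ℝ) - 1) * (P 2 x * P 0 x) := by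
  have H : ∀ n : ℕ, ∀ j : ℕ, j + 2 ≤ d → d - 2 - j = n →
      ∀ x ∈ Ioi (0:ℝ),
        ((d:ℝ) - j - 2) * (P (j+1) x)^2 ≤ ((d:ℝ) - j - 1) * (P (j+2) x * P j x) := by
    intro n
    induction n with
    | zero =>
      intro j hj hn x hx
      have hjd : j = d - 2 := by omega
      have hc0 : (d:ℝ) - j - 2 = 0 := by
        have : (j:ℝ) = (d:ℝ) - 2 := by
          have h2 : j + 2 = d := by omega
          have := congrArg (Nat.cast (R := ℝ)) h2
          push_cast at this
          linarith
        rw [this]; ring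
      have hc1 : (d:ℝ) - j - 1 = 1 := by
        have : (j:ℝ) = (d:ℝ) - 2 := by
          have h2 : j + 2 = d := by omega
          have := congrArg (Nat.cast (R := ℝ)) h2
          push_cast at this
          linarith
        rw [this]; ring
      rw [hc0, hc1]
      have h1 := hpos (j+2) (by omega) x hx
      have h2 := hpos j (by omega) x hx
      nlinarith
    | succ n ih =>
      intro j hj hn x hx
      set m : ℕ := d - 2 - j with hmdef
      have hm1 : 1 ≤ m := by omega
      have hmcast : (m:ℝ) = (d:ℝ) - j - 2 := by
        have h2 : m + j + 2 = d := by omega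
        have := congrArg (Nat.cast (R := ℝ)) h2
        push_cast at this
        linarith
      have hj3 : j + 3 ≤ d := by omega
      have res := step m hm1 (P (j+1)) (fun y => -(P (j+2) y)) (P (j+3)) (P j)
        (hder j (by omega))
        (hpos j (by omega))
        (hder (j+1) (by omega))
        (fun y hy => by
          have := (hder (j+2) (by omega) y hy).neg
          simp only [neg_neg] at this; exact this)
        (hpos (j+1) (by omega))
        (fun y hy => by simp [hpos (j+2) (by omega) y hy])
        (hpos (j+3) (by omega))
        (hlim (j+1) (by omega) (by omega))
        (fun y hy => by
          have hprev := ih (j+1) (by omega) (by omega) y hy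
          have e1 : ((m:ℝ) - 1) = (d:ℝ) - (j+1:ℕ) - 2 := by push_cast; push_cast at hmcast; linarith
          have e2 : (m:ℝ) = (d:ℝ) - (j+1:ℕ) - 1 := by push_cast; push_cast at hmcast; linarith
          rw [e1, e2]
          simpa using hprev)
        x hx
      rw [hmcast] at res
      have e4 : ((d:ℝ) - j - 2 + 1) = (d:ℝ) - j - 1 := by ring
      rw [e4] at res
      simpa using res
  intro x hx
  have := H (d - 2) 0 (by omega) (by omega) x hx
  simpa using this

lemma key_convex (d : ℕ) (hd : 3 ≤ d) (P : ℕ → ℝ → ℝ)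
    (hder : ∀ k, k ≤ d - 1 → ∀ x ∈ Ioi (0:ℝ), HasDerivAt (P k) (-(P (k+1) x)) x)
    (hpos : ∀ k, k ≤ d → ∀ x ∈ Ioi (0:ℝ), 0 ≤ P k x)
    (hlim : ∀ k, 1 ≤ k → k ≤ d - 2 → Tendsto (P k) atTop (𝓝 0)) :
    ConvexOn ℝ {x : ℝ | 0 < x ∧ 0 < P 0 x} (fun x => P 0 x ^ (1/((d:ℝ) - 1))) := by
  have hkey := key d hd P hder hpos hlim
  set c : ℝ := 1/((d:ℝ) - 1) with hcdef
  have hd1 : (0:ℝ) < (d:ℝ) - 1 := by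
    have : (3:ℝ) ≤ (d:ℝ) := by exact_mod_cast hd
    linarith
  have hc0 : 0 < c := by rw [hcdef]; positivity
  set U := {x : ℝ | 0 < x ∧ 0 < P 0 x} with hUdef
  have hP0d : ∀ x ∈ Ioi (0:ℝ), HasDerivAt (P 0) (-(P 1 x)) x := hder 0 (by omega)
  have hP1d : ∀ x ∈ Ioi (0:ℝ), HasDerivAt (P 1) (-(P 2 x)) x := hder 1 (by omega)
  have hP0cont : ContinuousOn (P 0) (Ioi 0) :=
    fun t ht => ((hP0d t ht).continuousAt).continuousWithinAt
  have hP0anti : AntitoneOn (P 0) (Ioi 0) := by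
    refine antitoneOn_of_deriv_nonpos (convex_Ioi 0) hP0cont
      (fun t ht => ((hP0d t (interior_subset ht)).differentiableAt).differentiableWithinAt) ?_
    intro t ht
    rw [interior_Ioi] at ht
    rw [(hP0d t ht).deriv]
    simp [hpos 1 (by omega) t ht]
  have hUsub : U ⊆ Ioi (0:ℝ) := fun x hx => hx.1
  have hUconv : Convex ℝ U := by
    intro x hx y hy a b ha hb hab
    constructor
    · have h1 : min x y ≤ a • x + b • y := Convex.min_le_combo x y ha hb hab
      have h2 : 0 < min x y := lt_min hx.1 hy.1
      simp only [smul_eq_mul] at h1 ⊢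
      linarith
    · have h1 : a • x + b • y ≤ max x y := Convex.combo_le_max x y ha hb hab
      have h2 : 0 < a • x + b • y := by
        have h3 : min x y ≤ a • x + b • y := Convex.min_le_combo x y ha hb hab
        have h4 : 0 < min x y := lt_min hx.1 hy.1
        linarith
      have h5 : 0 < P 0 (max x y) := by
        rcases max_cases x y with ⟨h6, _⟩ | ⟨h6, _⟩ <;> rw [h6]
        · exact hx.2
        · exact hy.2
      have h7 := hP0anti (mem_Ioi.2 h2) (mem_Ioi.2 (lt_of_lt_of_le hx.1 (le_max_left x y))) h1
      linarith
  have hUopen : IsOpen U := by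
    have h1 : U = Ioi 0 ∩ P 0 ⁻¹' (Ioi 0) := by
      ext z; simp [hUdef, mem_Ioi, and_comm]
    rw [h1]
    exact hP0cont.isOpen_inter_preimage isOpen_Ioi isOpen_Ioi
  have hUint : interior U = U := hUopen.interior_eq
  -- derivative formulas on U
  set g : ℝ → ℝ := fun x => P 0 x ^ c with hgdef
  set gd : ℝ → ℝ := fun x => -(P 1 x) * c * P 0 x ^ (c - 1) with hgddef
  have hgd : ∀ x ∈ U, HasDerivAt g (gd x) x := fun x hx =>
    (hP0d x (hUsub hx)).rpow_const (Or.inl (ne_of_gt hx.2))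
  have hgderiv : ∀ x ∈ U, deriv g x = gd x := fun x hx => (hgd x hx).deriv
  have hgd2 : ∀ x ∈ U, HasDerivAt gd
      ((P 2 x * c) * P 0 x ^ (c - 1)
        + (-(P 1 x) * c) * (-(P 1 x) * (c - 1) * P 0 x ^ (c - 1 - 1))) x := by
    intro x hx
    have h1 : HasDerivAt (fun y => P 0 y ^ (c - 1)) (-(P 1 x) * (c - 1) * P 0 x ^ (c - 1 - 1)) x :=
      (hP0d x (hUsub hx)).rpow_const (Or.inl (ne_of_gt hx.2))
    have h2 : HasDerivAt (fun y => -(P 1 y) * c) (P 2 x * c) x := by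
      have := ((hP1d x (hUsub hx)).neg).mul_const c
      simpa using this
    exact h2.mul h1
  refine convexOn_of_deriv2_nonneg hUconv ?_ ?_ ?_ ?_
  · exact fun x hx => ((hgd x hx).continuousAt).continuousWithinAt
  · rw [hUint]
    exact fun x hx => ((hgd x hx).differentiableAt).differentiableWithinAt
  · rw [hUint]
    intro x hx
    have hev : deriv g =ᶠ[𝓝 x] gd := by
      filter_upwards [hUopen.mem_nhds hx] with y hy
      exact hgderiv y hy
    exact (((hgd2 x hx).differentiableAt).congr_of_eventuallyEq hev).differentiableWithinAt
  · rw [hUint]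
    intro x hx
    have hev : deriv g =ᶠ[𝓝 x] gd := by
      filter_upwards [hUopen.mem_nhds hx] with y hy
      exact hgderiv y hy
    have h1 : deriv^[2] g x = deriv (deriv g) x := by
      simp [Function.iterate_succ, Function.iterate_one]
    rw [h1, Filter.EventuallyEq.deriv_eq hev, (hgd2 x hx).deriv]
    -- sign computation
    have hP0x : 0 < P 0 x := hx.2
    have e1 : P 0 x ^ (c - 1) = P 0 x ^ (c - 1 - 1) * P 0 x := by
      rw [← Real.rpow_add_one (ne_of_gt hP0x) (c - 1 - 1)]
      norm_num
    have hp2 : (0:ℝ) ≤ P 0 x ^ (c - 1 - 1) := (Real.rpow_pos_of_pos hP0x _).le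
    have hq := hkey x (hUsub hx)
    have hq' : (1 - c) * (P 1 x)^2 ≤ P 2 x * P 0 x := by
      have hdm : ((d:ℝ) - 2) = ((d:ℝ) - 1) * (1 - c) := by
        rw [hcdef]; field_simp; ring
      have h3 : ((d:ℝ) - 1) * ((1 - c) * (P 1 x)^2) ≤ ((d:ℝ) - 1) * (P 2 x * P 0 x) := by
        calc ((d:ℝ) - 1) * ((1 - c) * (P 1 x)^2) = ((d:ℝ) - 2) * (P 1 x)^2 := by rw [hdm]; ring
        _ ≤ ((d:ℝ) - 1) * (P 2 x * P 0 x) := hq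
      exact le_of_mul_le_mul_left h3 hd1
    have goal_eq : (P 2 x * c) * P 0 x ^ (c - 1)
          + (-(P 1 x) * c) * (-(P 1 x) * (c - 1) * P 0 x ^ (c - 1 - 1))
        = c * (P 0 x ^ (c - 1 - 1)) * (P 2 x * P 0 x - (1 - c) * (P 1 x)^2) := by
      rw [e1]; ring
    rw [goal_eq]
    have h4 : 0 ≤ P 2 x * P 0 x - (1 - c) * (P 1 x)^2 := by linarith
    positivity

lemma Av_cont {ε : ℝ} (hε : 0 < ε) {g : ℝ → ℝ} (hg : ContinuousOn g (Ioi 0)) :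
    ContinuousOn (Av ε g) (Ioi 0) :=
  fun t ht => ((Av_hasDerivAt hε hg ht).continuousAt).continuousWithinAt

lemma Av_anti {ε : ℝ} (hε : 0 < ε) {g : ℝ → ℝ} (hg : ContinuousOn g (Ioi 0))
    (hganti : AntitoneOn g (Ioi 0)) : AntitoneOn (Av ε g) (Ioi 0) := by
  refine antitoneOn_of_deriv_nonpos (convex_Ioi 0) (Av_cont hε hg)
    (fun t ht => by
      rw [interior_Ioi] at ht
      exact ((Av_hasDerivAt hε hg ht).differentiableAt).differentiableWithinAt) ?_
  intro t ht
  rw [interior_Ioi] at ht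
  rw [(Av_hasDerivAt hε hg ht).deriv]
  have h1 : g (t + ε) ≤ g t := hganti ht (mem_Ioi.2 (by linarith [mem_Ioi.1 ht])) (by linarith)
  have h2 : g (t + ε) - g t ≤ 0 := by linarith
  exact div_nonpos_of_nonpos_of_nonneg h2 hε.le

lemma tendsto_zero_ladder {F G : ℝ → ℝ}
    (hFd : ∀ x ∈ Ioi (0:ℝ), HasDerivAt F (-(G x)) x)
    (hF0 : ∀ x ∈ Ioi (0:ℝ), 0 ≤ F x)
    (hG0 : ∀ x ∈ Ioi (0:ℝ), 0 ≤ G x)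
    (hGanti : AntitoneOn G (Ioi 0))
    (hGcont : ContinuousOn G (Ioi 0))
    (hFlim : Tendsto F atTop (𝓝 0)) : Tendsto G atTop (𝓝 0) := by
  rw [tendsto_order]
  constructor
  · intro a ha
    filter_upwards [eventually_gt_atTop (0:ℝ)] with y hy
    exact lt_of_lt_of_le ha (hG0 y hy)
  · intro a ha
    by_contra hcon
    have hfreq : ∃ᶠ y in atTop, a ≤ G y := by
      rw [Filter.not_eventually] at hcon
      exact hcon.mono (fun y hy => le_of_not_gt hy)
    have hall : ∀ t ∈ Ioi (0:ℝ), a ≤ G t := by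
      intro t ht
      rcases (hfreq.and_eventually (eventually_ge_atTop t)).exists with ⟨y, hy1, hy2⟩
      exact le_trans hy1 (hGanti ht (lt_of_lt_of_le ht hy2) hy2)
    have hFTC : ∀ y, 1 ≤ y → F 1 - F y = ∫ t in (1:ℝ)..y, G t := by
      intro y hy
      have h1 : (∫ t in (1:ℝ)..y, -(G t)) = F y - F 1 := by
        refine intervalIntegral.integral_eq_sub_of_hasDerivAt (fun t ht' => hFd t ?_)
          ((II_of_contOn hGcont one_pos (by linarith)).neg)
        have hmin : (0:ℝ) < min 1 y := lt_min one_pos (by linarith)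
        exact lt_of_lt_of_le hmin ht'.1
      rw [intervalIntegral.integral_neg] at h1
      linarith
    have hbound : ∀ y, 1 ≤ y → a * (y - 1) ≤ F 1 - F y := by
      intro y hy
      rw [hFTC y hy]
      have h2 : (∫ _t in (1:ℝ)..y, a) ≤ ∫ t in (1:ℝ)..y, G t := by
        refine intervalIntegral.integral_mono_on hy intervalIntegrable_const
          (II_of_contOn hGcont one_pos (by linarith)) (fun t ht => hall t ?_)
        simp only [mem_Ioi]; linarith [ht.1]
      rwa [intervalIntegral.integral_const, smul_eq_mul, mul_comm] at h2
    set y := 1 + (F 1 + 1) / a with hydef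
    have hF1 : 0 ≤ F 1 := hF0 1 (by norm_num)
    have hy1 : 1 ≤ y := by
      rw [hydef]
      have : 0 ≤ (F 1 + 1) / a := by positivity
      linarith
    have h3 := hbound y hy1
    have h4 : a * (y - 1) = F 1 + 1 := by
      rw [hydef]
      field_simp
      ring
    have h5 := hF0 y (by simp only [mem_Ioi]; linarith)
    linarith

lemma construct {d : ℕ} {ψ : ℝ → ℝ} (hd : 3 ≤ d) (hψ : IsArchGen ψ)
    (hmon : DMonotoneOn d ψ) {ε : ℝ} (hε : 0 < ε) :
    ∃ Pz : ℝ → ℝ,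
      ConvexOn ℝ {x : ℝ | 0 < x ∧ 0 < Pz x} (fun x => Pz x ^ (1/((d:ℝ) - 1))) ∧
      (∀ x, 0 < x → ψ (x + (ε + ε)) ≤ Pz x ∧ Pz x ≤ ψ x) := by
  obtain ⟨hcont, hanti, hone, hlim0, hrange, hstrict⟩ := hψ
  obtain ⟨hψc, hdiff, hsign, hGanti, hGconv⟩ := hmon
  set Q : ℕ → ℝ → ℝ := fun k x => (-1:ℝ)^k * iteratedDeriv k ψ x with hQdef
  have hQ0 : Q 0 = ψ := by
    funext x; simp [hQdef, iteratedDeriv_zero]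
  have hQd : ∀ k, k + 3 ≤ d → ∀ x ∈ Ioi (0:ℝ), HasDerivAt (Q k) (-(Q (k+1) x)) x := by
    intro k hk x hx
    have h1 : DifferentiableAt ℝ (iteratedDeriv k ψ) x := hdiff k (by omega) x hx
    have h2 : HasDerivAt (iteratedDeriv k ψ) (iteratedDeriv (k+1) ψ x) x := by
      have h3 := h1.hasDerivAt
      rwa [← iteratedDeriv_succ] at h3
    have h3 := h2.const_mul ((-1:ℝ)^k)
    have h4 : ((-1:ℝ)^k) * iteratedDeriv (k+1) ψ x
        = -((-1:ℝ)^(k+1) * iteratedDeriv (k+1) ψ x) := by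
      rw [pow_succ]; ring
    rw [h4] at h3
    exact h3
  have hQsign : ∀ k, k + 2 ≤ d → ∀ x ∈ Ioi (0:ℝ), 0 ≤ Q k x := hsign
  have hGanti' : AntitoneOn (Q (d-2)) (Ioi 0) := hGanti
  have hGconv' : ConvexOn ℝ (Ioi 0) (Q (d-2)) := hGconv
  have hQcont : ∀ k, k + 2 ≤ d → ContinuousOn (Q k) (Ioi 0) := by
    intro k hk
    by_cases hk3 : k + 3 ≤ d
    · exact fun x hx => ((hQd k hk3 x hx).continuousAt).continuousWithinAt
    · have hkeq : k = d - 2 := by omega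
      rw [hkeq]
      exact hGconv'.continuousOn isOpen_Ioi
  have hQanti : ∀ k, k + 2 ≤ d → AntitoneOn (Q k) (Ioi 0) := by
    intro k hk
    by_cases hk3 : k + 3 ≤ d
    · refine antitoneOn_of_deriv_nonpos (convex_Ioi 0) (hQcont k hk)
        (fun t ht => by
          rw [interior_Ioi] at ht
          exact ((hQd k hk3 t ht).differentiableAt).differentiableWithinAt) ?_
      intro t ht
      rw [interior_Ioi] at ht
      rw [(hQd k hk3 t ht).deriv]
      simp only [neg_nonpos]
      exact hQsign (k+1) (by omega) t ht
    · have hkeq : k = d - 2 := by omega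
      rw [hkeq]
      exact hGanti'
  have hQlim : ∀ k, k + 2 ≤ d → Tendsto (Q k) atTop (𝓝 0) := by
    intro k
    induction k with
    | zero => intro _; rw [hQ0]; exact hlim0
    | succ k ih =>
      intro hk
      exact tendsto_zero_ladder (hQd k (by omega)) (hQsign k (by omega))
        (hQsign (k+1) hk) (hQanti (k+1) hk) (hQcont (k+1) hk) (ih (by omega))
  -- the difference-quotient function at the top level
  set ρ : ℝ → ℝ := fun x => (Q (d-2) x - Q (d-2) (x + ε)) / ε with hρdef
  have hρ0 : ∀ x ∈ Ioi (0:ℝ), 0 ≤ ρ x := by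
    intro x hx
    have h1 : Q (d-2) (x + ε) ≤ Q (d-2) x :=
      hGanti' hx (mem_Ioi.2 (by linarith [mem_Ioi.1 hx])) (by linarith)
    have h2 : 0 ≤ Q (d-2) x - Q (d-2) (x + ε) := by linarith
    exact div_nonneg h2 hε.le
  have hρanti : AntitoneOn ρ (Ioi 0) := by
    intro x hx y hy hxy
    have h1 := convexOn_increments hGconv' (mem_Ioi.1 hx) hxy hε.le
    show (Q (d-2) y - Q (d-2) (y + ε)) / ε ≤ (Q (d-2) x - Q (d-2) (x + ε)) / ε
    rw [div_le_div_iff₀ hε hε]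
    nlinarith [hε.le]
  have hρcont : ContinuousOn ρ (Ioi 0) := by
    have h1 : ContinuousOn (fun x => Q (d-2) (x + ε)) (Ioi 0) := by
      refine (hQcont (d-2) (by omega)).comp
        ((continuous_id.add continuous_const).continuousOn) ?_
      intro x hx
      simp only [mem_Ioi] at hx ⊢
      linarith
    exact (((hQcont (d-2) (by omega)).sub h1).div_const ε)
  -- the ladder
  set P : ℕ → ℝ → ℝ := fun k =>
    if k + 2 ≤ d then Av ε (Av ε (Q k))
    else if k = d - 1 then Av ε ρ
    else fun x => (ρ x - ρ (x + ε)) / ε with hPdef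
  have hPeq1 : ∀ k, k + 2 ≤ d → P k = Av ε (Av ε (Q k)) := by
    intro k hk; simp only [hPdef]; rw [if_pos hk]
  have hPeq2 : P (d-1) = Av ε ρ := by
    simp only [hPdef]; rw [if_neg (by omega)]; simp
  have hPeq3 : P d = fun x => (ρ x - ρ (x + ε)) / ε := by
    simp only [hPdef]; rw [if_neg (by omega), if_neg (by omega)]
  have hAvQcont : ∀ k, k + 2 ≤ d → ContinuousOn (Av ε (Q k)) (Ioi 0) :=
    fun k hk => Av_cont hε (hQcont k hk)
  -- derivative ladder
  have hPder : ∀ k, k ≤ d - 1 → ∀ x ∈ Ioi (0:ℝ), HasDerivAt (P k) (-(P (k+1) x)) x := by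
    intro k hk x hx
    by_cases hk3 : k + 3 ≤ d
    · rw [hPeq1 k (by omega), hPeq1 (k+1) (by omega)]
      have hinner : ∀ y ∈ Ioi (0:ℝ), HasDerivAt (Av ε (Q k)) (-(Av ε (Q (k+1)) y)) y :=
        fun y hy => Av_hasDerivAt' hε (hQcont (k+1) (by omega)) (hQd k hk3) hy
      exact Av_hasDerivAt' hε (hAvQcont (k+1) (by omega)) hinner hx
    by_cases hk2 : k + 2 ≤ d
    · have hkeq : k = d - 2 := by omega
      have hk1eq : k + 1 = d - 1 := by omega
      rw [hPeq1 k hk2, hk1eq, hPeq2]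
      have hinner : ∀ y ∈ Ioi (0:ℝ), HasDerivAt (Av ε (Q k)) (-(ρ y)) y := by
        intro y hy
        have h1 := Av_hasDerivAt hε (hQcont k hk2) (mem_Ioi.1 hy)
        have h2 : (Q k (y + ε) - Q k y) / ε = -(ρ y) := by
          rw [hρdef, hkeq]
          dsimp only
          ring
        rwa [h2] at h1
      exact Av_hasDerivAt' hε hρcont hinner hx
    · have hkeq : k = d - 1 := by omega
      have hk1eq : d - 1 + 1 = d := by omega
      rw [hkeq, hk1eq, hPeq2, hPeq3]
      have h1 := Av_hasDerivAt hε hρcont (mem_Ioi.1 hx)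
      have h2 : (ρ (x + ε) - ρ x) / ε = -((fun x => (ρ x - ρ (x + ε)) / ε) x) := by
        dsimp only; ring
      rwa [h2] at h1
  -- positivity ladder
  have hPpos : ∀ k, k ≤ d → ∀ x ∈ Ioi (0:ℝ), 0 ≤ P k x := by
    intro k hk x hx
    by_cases hk2 : k + 2 ≤ d
    · rw [hPeq1 k hk2]
      exact Av_nonneg hε (fun t ht => Av_nonneg hε (hQsign k hk2) (mem_Ioi.1 ht)) (mem_Ioi.1 hx)
    by_cases hk1 : k = d - 1
    · rw [hk1, hPeq2]
      exact Av_nonneg hε hρ0 (mem_Ioi.1 hx)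
    · have hkeq : k = d := by omega
      rw [hkeq, hPeq3]
      have h1 : ρ (x + ε) ≤ ρ x :=
        hρanti hx (mem_Ioi.2 (by linarith [mem_Ioi.1 hx])) (by linarith)
      dsimp only
      have h2 : 0 ≤ ρ x - ρ (x + ε) := by linarith
      exact div_nonneg h2 hε.le
  -- limits
  have hAvQanti : ∀ k, k + 2 ≤ d → AntitoneOn (Av ε (Q k)) (Ioi 0) :=
    fun k hk => Av_anti hε (hQcont k hk) (hQanti k hk)
  have hAvQpos : ∀ k, k + 2 ≤ d → ∀ t ∈ Ioi (0:ℝ), 0 ≤ Av ε (Q k) t :=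
    fun k hk t ht => Av_nonneg hε (hQsign k hk) (mem_Ioi.1 ht)
  have hPlim : ∀ k, 1 ≤ k → k ≤ d - 2 → Tendsto (P k) atTop (𝓝 0) := by
    intro k _ hk
    rw [hPeq1 k (by omega)]
    exact Av_tendsto hε (hAvQcont k (by omega)) (hAvQanti k (by omega)) (hAvQpos k (by omega))
      (Av_tendsto hε (hQcont k (by omega)) (hQanti k (by omega)) (hQsign k (by omega))
        (hQlim k (by omega)))
  -- bounds for P 0
  have hψcont' : ContinuousOn ψ (Ioi 0) := hcont.mono Ioi_subset_Ici_self
  have hψanti' : AntitoneOn ψ (Ioi 0) := hanti.mono Ioi_subset_Ici_self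
  have hbounds : ∀ x, 0 < x → ψ (x + (ε + ε)) ≤ P 0 x ∧ P 0 x ≤ ψ x := by
    intro x hx
    have heq : P 0 = Av ε (Av ε ψ) := by
      rw [hPeq1 0 (by omega), hQ0]
    have hAvψcont : ContinuousOn (Av ε ψ) (Ioi 0) := Av_cont hε hψcont'
    have hAvψanti : AntitoneOn (Av ε ψ) (Ioi 0) := Av_anti hε hψcont' hψanti'
    constructor
    · rw [heq]
      have h1 : Av ε ψ (x + ε) ≤ Av ε (Av ε ψ) x := le_Av hε hAvψcont hAvψanti hx
      have h2 : ψ (x + ε + ε) ≤ Av ε ψ (x + ε) := le_Av hε hψcont' hψanti' (by linarith)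
      have h3 : x + (ε + ε) = x + ε + ε := by ring
      rw [h3]
      linarith
    · rw [heq]
      have h1 : Av ε (Av ε ψ) x ≤ Av ε ψ x := Av_le hε hAvψcont hAvψanti hx
      have h2 : Av ε ψ x ≤ ψ x := Av_le hε hψcont' hψanti' hx
      linarith
  exact ⟨P 0, key_convex d hd P hPder hPpos hPlim, hbounds⟩

lemma concave_final {d : ℕ} {ψ : ℝ → ℝ} (hd : 3 ≤ d) (hψ : IsArchGen ψ)
    (hmon : DMonotoneOn d ψ) :
    ConcaveOn ℝ {x : ℝ | 0 < x ∧ 0 < ψ x} (fun x => 1 - ψ x ^ (1/((d:ℝ) - 1))) := by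
  obtain ⟨hcont, hanti, hone, hlim0, hrange, hstrict⟩ := hψ
  set c : ℝ := 1/((d:ℝ) - 1) with hcdef
  have hd1 : (0:ℝ) < (d:ℝ) - 1 := by
    have : (3:ℝ) ≤ (d:ℝ) := by exact_mod_cast hd
    linarith
  have hc0 : 0 < c := by rw [hcdef]; positivity
  have hSconv : Convex ℝ {x : ℝ | 0 < x ∧ 0 < ψ x} := by
    intro x hx y hy a b ha hb hab
    have h1 := Convex.min_le_combo x y ha hb hab
    have h2 : 0 < min x y := lt_min hx.1 hy.1
    have hz1 : 0 < a • x + b • y := lt_of_lt_of_le h2 h1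
    refine ⟨hz1, ?_⟩
    have h3 := Convex.combo_le_max x y ha hb hab
    have h4 : 0 < ψ (max x y) := by
      rcases max_cases x y with ⟨h, _⟩ | ⟨h, _⟩ <;> rw [h]
      · exact hx.2
      · exact hy.2
    have h5 : ψ (max x y) ≤ ψ (a • x + b • y) :=
      hanti (mem_Ici.2 hz1.le) (mem_Ici.2 (le_trans hx.1.le (le_max_left x y))) h3
    linarith
  refine ⟨hSconv, ?_⟩
  intro x hx y hy a b ha hb hab
  simp only [smul_eq_mul]
  set z := a * x + b * y with hzdef
  have hzS : z ∈ {x : ℝ | 0 < x ∧ 0 < ψ x} := by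
    have := hSconv hx hy ha hb hab
    simpa [smul_eq_mul] using this
  suffices h : ψ z ^ c ≤ a * ψ x ^ c + b * ψ y ^ c by linarith
  -- positivity neighborhoods
  have hnbhd : ∀ w : ℝ, 0 < w → 0 < ψ w → ∃ δ > 0, ∀ t, w ≤ t → t ≤ w + δ → 0 < ψ t := by
    intro w hw hψw
    have hψc : ContinuousAt ψ w := hcont.continuousAt (Ici_mem_nhds hw)
    have hev : ∀ᶠ t in 𝓝 w, 0 < ψ t := hψc.eventually (eventually_gt_nhds hψw)
    rcases Metric.eventually_nhds_iff.1 hev with ⟨δ, hδ0, hδ⟩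
    refine ⟨δ/2, by positivity, fun t h1 h2 => hδ ?_⟩
    rw [Real.dist_eq, abs_of_nonneg (by linarith)]
    linarith
  obtain ⟨δx, hδx0, hδx⟩ := hnbhd x hx.1 hx.2
  obtain ⟨δy, hδy0, hδy⟩ := hnbhd y hy.1 hy.2
  have hev : ∀ᶠ ε in 𝓝[>] (0:ℝ), ψ (z + (ε + ε)) ^ c ≤ a * ψ x ^ c + b * ψ y ^ c := by
    have hmin0 : 0 < min δx δy / 2 := by positivity
    filter_upwards [Ioo_mem_nhdsGT_of_mem (⟨le_refl (0:ℝ), hmin0⟩ : (0:ℝ) ∈ Ico 0 (min δx δy / 2))]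
      with ε hε
    obtain ⟨Pz, hPconv, hPb⟩ := construct hd
      ⟨hcont, hanti, hone, hlim0, hrange, hstrict⟩ hmon hε.1
    have hεδx : ε + ε ≤ δx := by
      have := hε.2
      have h6 : min δx δy ≤ δx := min_le_left _ _
      linarith [hε.2]
    have hεδy : ε + ε ≤ δy := by
      have h6 : min δx δy ≤ δy := min_le_right _ _
      linarith [hε.2]
    have hxU : x ∈ {t : ℝ | 0 < t ∧ 0 < Pz t} := by
      refine ⟨hx.1, lt_of_lt_of_le ?_ (hPb x hx.1).1⟩
      exact hδx (x + (ε + ε)) (by linarith [hε.1]) (by linarith)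
    have hyU : y ∈ {t : ℝ | 0 < t ∧ 0 < Pz t} := by
      refine ⟨hy.1, lt_of_lt_of_le ?_ (hPb y hy.1).1⟩
      exact hδy (y + (ε + ε)) (by linarith [hε.1]) (by linarith)
    have hcomb := hPconv.2 hxU hyU ha hb hab
    simp only [smul_eq_mul] at hcomb
    have h5 : ψ (z + (ε + ε)) ^ c ≤ Pz z ^ c := by
      refine Real.rpow_le_rpow ?_ (hPb z hzS.1).1 hc0.le
      exact (hrange _ (mem_Ici.2 (by linarith [hzS.1, hε.1]))).1
    have h6 : Pz x ^ c ≤ ψ x ^ c := Real.rpow_le_rpow hxU.2.le (hPb x hx.1).2 hc0.le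
    have h7 : Pz y ^ c ≤ ψ y ^ c := Real.rpow_le_rpow hyU.2.le (hPb y hy.1).2 hc0.le
    have h8 : a * Pz x ^ c + b * Pz y ^ c ≤ a * ψ x ^ c + b * ψ y ^ c :=
      add_le_add (mul_le_mul_of_nonneg_left h6 ha) (mul_le_mul_of_nonneg_left h7 hb)
    calc ψ (z + (ε + ε)) ^ c ≤ Pz z ^ c := h5
      _ = Pz (a * x + b * y) ^ c := by rw [hzdef]
      _ ≤ a * Pz x ^ c + b * Pz y ^ c := hcomb
      _ ≤ a * ψ x ^ c + b * ψ y ^ c := h8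
  have hlimε : Tendsto (fun ε : ℝ => ψ (z + (ε + ε)) ^ c) (𝓝[>] (0:ℝ)) (𝓝 (ψ z ^ c)) := by
    have h0 : Tendsto (fun ε : ℝ => z + (ε + ε)) (𝓝 (0:ℝ)) (𝓝 z) := by
      have h1 : Tendsto (fun ε : ℝ => z + (ε + ε)) (𝓝 (0:ℝ)) (𝓝 (z + ((0:ℝ) + 0))) :=
        (tendsto_id.add tendsto_id).const_add z
      simpa using h1
    have h2 : ContinuousAt (fun u : ℝ => ψ u ^ c) z := by
      have h3 : ContinuousAt ψ z := hcont.continuousAt (Ici_mem_nhds hzS.1)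
      have h4 : ContinuousAt (fun v : ℝ => v ^ c) (ψ z) :=
        Real.continuousAt_rpow_const _ _ (Or.inr hc0.le)
      exact h4.comp h3
    exact (h2.tendsto.comp h0).mono_left nhdsWithin_le_nhds
  exact le_of_tendsto hlimε hev

variable {d : ℕ} {ψ : ℝ → ℝ}

/-- Subadditivity of `f = 1 - ψ^c` given its concavity on the positivity region. -/
lemma subadd (hd : 3 ≤ d) (hψ : IsArchGen ψ)
    (hconc : ConcaveOn ℝ {x : ℝ | 0 < x ∧ 0 < ψ x} (fun x => 1 - ψ x ^ (1/((d:ℝ) - 1)))) :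
    ∀ p q : ℝ, 0 ≤ p → 0 ≤ q →
      1 - ψ (p + q) ^ (1/((d:ℝ) - 1)) ≤
        (1 - ψ p ^ (1/((d:ℝ) - 1))) + (1 - ψ q ^ (1/((d:ℝ) - 1))) := by
  obtain ⟨hcont, hanti, hone, hlim0, hrange, hstrict⟩ := hψ
  set c : ℝ := 1/((d:ℝ) - 1) with hcdef
  have hd1 : (0:ℝ) < (d:ℝ) - 1 := by
    have : (3:ℝ) ≤ (d:ℝ) := by exact_mod_cast hd
    linarith
  have hc0 : 0 < c := by rw [hcdef]; positivity
  set f : ℝ → ℝ := fun x => 1 - ψ x ^ c with hfdef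
  have hf0 : f 0 = 0 := by simp [hfdef, hone]
  have hf_nonneg : ∀ x, 0 ≤ x → 0 ≤ f x := by
    intro x hx
    have h1 : ψ x ^ c ≤ 1 := Real.rpow_le_one (hrange x hx).1 (hrange x hx).2 hc0.le
    simp only [hfdef]; linarith
  have hf_cont : ContinuousOn f (Ici 0) := by
    refine continuousOn_const.sub (hcont.rpow_const ?_)
    exact fun x _ => Or.inr hc0.le
  have hf_mono : MonotoneOn f (Ici 0) := by
    intro p hp q hq hpq
    have h1 : ψ q ≤ ψ p := hanti hp hq hpq
    have h2 : ψ q ^ c ≤ ψ p ^ c := Real.rpow_le_rpow (hrange q hq).1 h1 hc0.le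
    simp only [hfdef]; linarith
  -- case 1 : interior subadditivity
  have sub1 : ∀ p q : ℝ, 0 < p → 0 < q → 0 < ψ (p + q) → f (p + q) ≤ f p + f q := by
    have hkey : ∀ p q : ℝ, 0 < p → 0 < q → 0 < ψ (p + q) →
        (p/(p+q)) * f (p+q) ≤ f p := by
      intro p q hp hq hpq
      have hpqS : (p+q) ∈ {x : ℝ | 0 < x ∧ 0 < ψ x} := ⟨by linarith, hpq⟩
      have hpS : p ∈ {x : ℝ | 0 < x ∧ 0 < ψ x} := by
        refine ⟨hp, lt_of_lt_of_le hpq ?_⟩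
        exact hanti (mem_Ici.2 hp.le) (mem_Ici.2 (by linarith)) (by linarith)
      have hev : ∀ᶠ δ in 𝓝[>] (0:ℝ),
          (q/(p+q-δ)) * f δ + ((p-δ)/(p+q-δ)) * f (p+q) ≤ f p := by
        filter_upwards [Ioo_mem_nhdsGT_of_mem (⟨le_refl (0:ℝ), hp⟩ : (0:ℝ) ∈ Ico 0 p)]
          with δ hδ
        have hδS : δ ∈ {x : ℝ | 0 < x ∧ 0 < ψ x} := by
          refine ⟨hδ.1, lt_of_lt_of_le hpq ?_⟩
          exact hanti (mem_Ici.2 hδ.1.le) (mem_Ici.2 (by linarith)) (by linarith [hδ.2])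
        have hden : 0 < p + q - δ := by linarith [hδ.2]
        have ha' : 0 ≤ q/(p+q-δ) := by positivity
        have hb' : 0 ≤ (p-δ)/(p+q-δ) := div_nonneg (by linarith [hδ.2]) hden.le
        have hab' : q/(p+q-δ) + (p-δ)/(p+q-δ) = 1 := by field_simp; ring
        have hcomb := hconc.2 hδS hpqS ha' hb' hab'
        have harg : (q/(p+q-δ)) • δ + ((p-δ)/(p+q-δ)) • (p+q) = p := by
          simp only [smul_eq_mul]
          field_simp
          ring
        rw [harg] at hcomb
        simpa [smul_eq_mul, hfdef] using hcomb
      have hlim1 : Tendsto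
          (fun δ : ℝ => (q/(p+q-δ)) * f δ + ((p-δ)/(p+q-δ)) * f (p+q)) (𝓝[>] (0:ℝ))
          (𝓝 ((q/(p+q)) * f 0 + (p/(p+q)) * f (p+q))) := by
        have hne : (p + q : ℝ) ≠ 0 := by positivity
        have hfc0 : Tendsto f (𝓝[>] (0:ℝ)) (𝓝 (f 0)) := by
          have h1 : ContinuousWithinAt f (Ici 0) 0 := hf_cont 0 self_mem_Ici
          exact h1.tendsto.mono_left (nhdsWithin_mono 0 Ioi_subset_Ici_self)
        have hq1 : Tendsto (fun δ : ℝ => q/(p+q-δ)) (𝓝[>] (0:ℝ)) (𝓝 (q/(p+q))) := by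
          have h2 : Tendsto (fun δ : ℝ => q/(p+q-δ)) (𝓝 (0:ℝ)) (𝓝 (q/(p+q-0))) :=
            tendsto_const_nhds.div (tendsto_const_nhds.sub tendsto_id) (by simpa using hne)
          simpa using h2.mono_left nhdsWithin_le_nhds
        have hq2 : Tendsto (fun δ : ℝ => ((p-δ)/(p+q-δ)) * f (p+q)) (𝓝[>] (0:ℝ))
            (𝓝 ((p/(p+q)) * f (p+q))) := by
          have h2 : Tendsto (fun δ : ℝ => ((p-δ)/(p+q-δ)) * f (p+q)) (𝓝 (0:ℝ))
              (𝓝 (((p-0)/(p+q-0)) * f (p+q))) := by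
            refine Tendsto.mul_const _ ?_
            exact (tendsto_const_nhds.sub tendsto_id).div
              (tendsto_const_nhds.sub tendsto_id) (by simpa using hne)
          simpa using h2.mono_left nhdsWithin_le_nhds
        exact (hq1.mul hfc0).add hq2
      rw [hf0, mul_zero, zero_add] at hlim1
      exact le_of_tendsto hlim1 hev
    intro p q hp hq hpq
    have h1 := hkey p q hp hq hpq
    have h2 := hkey q p hq hp (by rwa [add_comm])
    rw [add_comm q p] at h2
    have hne : (p + q : ℝ) ≠ 0 := by positivity
    have h3 : (p/(p+q)) * f (p+q) + (q/(p+q)) * f (p+q) = f (p+q) := by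
      field_simp
    have h4 := add_le_add h1 h2
    rw [h3] at h4
    exact h4
  -- general subadditivity
  intro p q hp hq
  show f (p + q) ≤ f p + f q
  rcases eq_or_lt_of_le hp with rfl | hp0
  · rw [zero_add, hf0, zero_add]
  rcases eq_or_lt_of_le hq with rfl | hq0
  · rw [add_zero, hf0, add_zero]
  by_cases hψpq : 0 < ψ (p+q)
  · exact sub1 p q hp0 hq0 hψpq
  have hψpq0 : ψ (p+q) = 0 :=
    le_antisymm (not_lt.1 hψpq) (hrange _ (mem_Ici.2 (by linarith))).1
  have hfpq : f (p+q) = 1 := by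
    simp only [hfdef]
    rw [hψpq0, Real.zero_rpow (ne_of_gt hc0)]
    ring
  rw [hfpq]
  by_cases hp1 : ψ p ≤ 0
  · have h1 : ψ p = 0 := le_antisymm hp1 (hrange p (mem_Ici.2 hp)).1
    have hfp : f p = 1 := by
      simp only [hfdef]; rw [h1, Real.zero_rpow (ne_of_gt hc0)]; ring
    have h2 := hf_nonneg q hq
    linarith
  by_cases hq1 : ψ q ≤ 0
  · have h1 : ψ q = 0 := le_antisymm hq1 (hrange q (mem_Ici.2 hq)).1
    have hfq : f q = 1 := by
      simp only [hfdef]; rw [h1, Real.zero_rpow (ne_of_gt hc0)]; ring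
    have h2 := hf_nonneg p hp
    linarith
  push_neg at hp1 hq1
  -- the boundary point
  set E := Ici (0:ℝ) ∩ ψ ⁻¹' (Iic 0) with hEdef
  have hEcl : IsClosed E := hcont.preimage_isClosed_of_isClosed isClosed_Ici isClosed_Iic
  have hEne : E.Nonempty := ⟨p+q, mem_Ici.2 (by linarith), mem_Iic.2 (le_of_eq hψpq0)⟩
  have hEbdd : BddBelow E := ⟨0, fun t ht => ht.1⟩
  set x₀ := sInf E with hx₀def
  have hx₀E : x₀ ∈ E := hEcl.csInf_mem hEne hEbdd
  have hψx₀ : ψ x₀ = 0 := le_antisymm hx₀E.2 ((hrange x₀ hx₀E.1).1)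
  have hx₀pos : 0 < x₀ := by
    rcases eq_or_lt_of_le (show (0:ℝ) ≤ x₀ from hx₀E.1) with h | h
    · exfalso; rw [← h, hone] at hψx₀; norm_num at hψx₀
    · exact h
  have hpx₀ : p < x₀ := by
    by_contra hcon
    push_neg at hcon
    have h1 : ψ p ≤ ψ x₀ := hanti (mem_Ici.2 hx₀pos.le) (mem_Ici.2 hp) hcon
    rw [hψx₀] at h1
    linarith
  have hqx₀ : q < x₀ := by
    by_contra hcon
    push_neg at hcon
    have h1 : ψ q ≤ ψ x₀ := hanti (mem_Ici.2 hx₀pos.le) (mem_Ici.2 hq) hcon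
    rw [hψx₀] at h1
    linarith
  have hsum : x₀ ≤ p + q := csInf_le hEbdd ⟨mem_Ici.2 (by linarith), mem_Iic.2 (le_of_eq hψpq0)⟩
  set p'' := x₀ - q with hp''def
  have hp''pos : 0 < p'' := by rw [hp''def]; linarith
  have hp''le : p'' ≤ p := by rw [hp''def]; linarith
  have h1le : 1 ≤ f p'' + f q := by
    have hev : ∀ᶠ δ in 𝓝[>] (0:ℝ), f (x₀ - δ) ≤ f p'' + f (q - δ) := by
      filter_upwards [Ioo_mem_nhdsGT_of_mem (⟨le_refl (0:ℝ), hq0⟩ : (0:ℝ) ∈ Ico 0 q)]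
        with δ hδ
      have hψ' : 0 < ψ (x₀ - δ) := by
        by_contra hcon
        have hmem : (x₀ - δ) ∈ E :=
          ⟨mem_Ici.2 (by linarith [hδ.2]), mem_Iic.2 (not_lt.1 hcon)⟩
        have h2 := csInf_le hEbdd hmem
        rw [← hx₀def] at h2
        linarith [hδ.1]
      have h3 := sub1 p'' (q - δ) hp''pos (by linarith [hδ.2])
        (by rw [show p'' + (q - δ) = x₀ - δ by rw [hp''def]; ring]; exact hψ')
      rwa [show p'' + (q - δ) = x₀ - δ by rw [hp''def]; ring] at h3
    have hlim1 : Tendsto (fun δ : ℝ => f (x₀ - δ)) (𝓝[>] (0:ℝ)) (𝓝 (f x₀)) := by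
      have hfc : ContinuousAt f x₀ := hf_cont.continuousAt (Ici_mem_nhds hx₀pos)
      have harg : Tendsto (fun δ : ℝ => x₀ - δ) (𝓝[>] (0:ℝ)) (𝓝 x₀) := by
        have h4 : Tendsto (fun δ : ℝ => x₀ - δ) (𝓝 (0:ℝ)) (𝓝 (x₀ - 0)) :=
          tendsto_const_nhds.sub tendsto_id
        simpa using h4.mono_left nhdsWithin_le_nhds
      exact hfc.tendsto.comp harg
    have hlim2 : Tendsto (fun δ : ℝ => f p'' + f (q - δ)) (𝓝[>] (0:ℝ))
        (𝓝 (f p'' + f q)) := by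
      have hfc : ContinuousAt f q := hf_cont.continuousAt (Ici_mem_nhds hq0)
      have harg : Tendsto (fun δ : ℝ => q - δ) (𝓝[>] (0:ℝ)) (𝓝 q) := by
        have h4 : Tendsto (fun δ : ℝ => q - δ) (𝓝 (0:ℝ)) (𝓝 (q - 0)) :=
          tendsto_const_nhds.sub tendsto_id
        simpa using h4.mono_left nhdsWithin_le_nhds
      exact tendsto_const_nhds.add (hfc.tendsto.comp harg)
    have h5 := le_of_tendsto_of_tendsto hlim1 hlim2 hev
    have hfx₀ : f x₀ = 1 := by
      simp only [hfdef]; rw [hψx₀, Real.zero_rpow (ne_of_gt hc0)]; ring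
    rw [hfx₀] at h5
    exact h5
  have h6 : f p'' ≤ f p := hf_mono (mem_Ici.2 hp''pos.le) (mem_Ici.2 hp) hp''le
  linarith

lemma psiInv_nonneg (ψ : ℝ → ℝ) (u : ℝ) : 0 ≤ psiInv ψ u := by
  unfold psiInv
  rcases eq_empty_or_nonempty {x : ℝ | 0 ≤ x ∧ ψ x ≤ u} with h | h
  · rw [h, Real.sInf_empty]
  · exact le_csInf h (fun b hb => hb.1)

lemma psiInv_eq (hψ : IsArchGen ψ) {u : ℝ} (hu0 : 0 < u) (hu1 : u ≤ 1) :
    ψ (psiInv ψ u) = u := by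
  obtain ⟨hcont, hanti, hone, hlim0, hrange, hstrict⟩ := hψ
  have hEeq : {x : ℝ | 0 ≤ x ∧ ψ x ≤ u} = Ici (0:ℝ) ∩ ψ ⁻¹' (Iic u) := by
    ext t; simp [mem_Ici, mem_Iic]
  have hEne : {x : ℝ | 0 ≤ x ∧ ψ x ≤ u}.Nonempty := by
    have hev : ∀ᶠ t in atTop, ψ t < u := hlim0.eventually_lt_const hu0
    rcases (hev.and (eventually_ge_atTop (0:ℝ))).exists with ⟨t, h1, h2⟩
    exact ⟨t, h2, h1.le⟩
  have hEcl : IsClosed {x : ℝ | 0 ≤ x ∧ ψ x ≤ u} := by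
    rw [hEeq]
    exact hcont.preimage_isClosed_of_isClosed isClosed_Ici isClosed_Iic
  have hEbdd : BddBelow {x : ℝ | 0 ≤ x ∧ ψ x ≤ u} := ⟨0, fun t ht => ht.1⟩
  have hmem : psiInv ψ u ∈ {x : ℝ | 0 ≤ x ∧ ψ x ≤ u} := hEcl.csInf_mem hEne hEbdd
  refine le_antisymm hmem.2 ?_
  rcases eq_or_lt_of_le hmem.1 with h0 | h0
  · rw [← h0, hone]; exact hu1
  · have hlt : ∀ t, 0 ≤ t → t < psiInv ψ u → u < ψ t := by
      intro t ht1 ht2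
      by_contra hcon
      have hmem2 : t ∈ {x : ℝ | 0 ≤ x ∧ ψ x ≤ u} := ⟨ht1, not_lt.1 hcon⟩
      have h1 : psiInv ψ u ≤ t := csInf_le hEbdd hmem2
      linarith
    have hfc : ContinuousAt ψ (psiInv ψ u) := hcont.continuousAt (Ici_mem_nhds h0)
    have hlim : Tendsto ψ (𝓝[<] (psiInv ψ u)) (𝓝 (ψ (psiInv ψ u))) :=
      hfc.tendsto.mono_left nhdsWithin_le_nhds
    have hev : ∀ᶠ t in 𝓝[<] (psiInv ψ u), u ≤ ψ t := by
      filter_upwards [Ioo_mem_nhdsLT_of_mem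
        (⟨half_lt_self h0, le_refl _⟩ : psiInv ψ u ∈ Ioc (psiInv ψ u / 2) (psiInv ψ u))]
        with t ht
      exact (hlt t (by linarith [ht.1, half_pos h0]) ht.2).le
    have : NeBot (𝓝[<] (psiInv ψ u)) := nhdsLT_neBot _
    exact ge_of_tendsto hlim hev


lemma part2 (d : ℕ) (hd : 3 ≤ d) (ψ : ℝ → ℝ) (hψ : IsArchGen ψ)
    (hconc : ConcaveOn ℝ {x : ℝ | 0 < x ∧ 0 < ψ x}
      (fun x => 1 - ψ x ^ (1/((d:ℝ) - 1)))) :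
    ∀ u : Fin d → ℝ, (∀ i, u i ∈ Set.Icc (0:ℝ) 1) →
      max ((∑ i, u i ^ (1/((d:ℝ) - 1))) - d + 1) 0 ^ (d - 1)
        ≤ ψ (∑ i, psiInv ψ (u i)) := by
  intro u hu
  obtain ⟨hcont, hanti, hone, hlim0, hrange, hstrict⟩ := hψ
  set c : ℝ := 1/((d:ℝ) - 1) with hcdef
  have hd1 : (0:ℝ) < (d:ℝ) - 1 := by
    have : (3:ℝ) ≤ (d:ℝ) := by exact_mod_cast hd
    linarith
  have hc0 : 0 < c := by rw [hcdef]; positivity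
  set f : ℝ → ℝ := fun x => 1 - ψ x ^ c with hfdef
  have hf0 : f 0 = 0 := by simp [hfdef, hone]
  have hsubadd := subadd hd ⟨hcont, hanti, hone, hlim0, hrange, hstrict⟩ hconc
  set xs : Fin d → ℝ := fun i => psiInv ψ (u i) with hxsdef
  have hxs0 : ∀ i, 0 ≤ xs i := fun i => psiInv_nonneg ψ (u i)
  set t := ∑ i, xs i with htdef
  have ht0 : 0 ≤ t := Finset.sum_nonneg (fun i _ => hxs0 i)
  have hψt0 : 0 ≤ ψ t := (hrange t (mem_Ici.2 ht0)).1
  by_cases hzero : ∃ i, u i = 0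
  · obtain ⟨i, hi⟩ := hzero
    have h1 : ∀ j, u j ^ c ≤ 1 := fun j =>
      Real.rpow_le_one (hu j).1 (hu j).2 hc0.le
    have h2 : u i ^ c = 0 := by rw [hi, Real.zero_rpow (ne_of_gt hc0)]
    have h3 : (∑ j, u j ^ c) ≤ (d:ℝ) - 1 := by
      have h4 := Finset.sum_erase_add Finset.univ (fun j => u j ^ c) (Finset.mem_univ i)
      have h5 : (∑ j ∈ Finset.univ.erase i, u j ^ c) ≤ ((d - 1 : ℕ) : ℝ) := by
        have h6 := Finset.sum_le_card_nsmul (Finset.univ.erase i) (fun j => u j ^ c) 1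
          (fun j _ => h1 j)
        rw [Finset.card_erase_of_mem (Finset.mem_univ i), Finset.card_univ, Fintype.card_fin] at h6
        simpa using h6
      have h7 : ((d - 1 : ℕ) : ℝ) = (d:ℝ) - 1 := by
        have : (1:ℕ) ≤ d := by omega
        push_cast [Nat.cast_sub this]
        ring
      rw [← h4]
      rw [h2, add_zero]
      rw [h7] at h5
      exact h5
    have h4 : (∑ j, u j ^ c) - d + 1 ≤ 0 := by linarith
    rw [max_eq_right h4, zero_pow (by omega : d - 1 ≠ 0)]
    exact hψt0
  · push_neg at hzero
    have hui : ∀ i, 0 < u i := fun i => lt_of_le_of_ne (hu i).1 (Ne.symm (hzero i))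
    have hψxs : ∀ i, ψ (xs i) = u i := fun i =>
      psiInv_eq ⟨hcont, hanti, hone, hlim0, hrange, hstrict⟩ (hui i) (hu i).2
    have hsum_eq : (∑ i, u i ^ c) - d + 1 = 1 - ∑ i, f (xs i) := by
      have h1 : ∀ i, u i ^ c = 1 - f (xs i) := by
        intro i
        simp only [hfdef]
        rw [hψxs i]
        ring
      rw [Finset.sum_congr rfl (fun i _ => h1 i), Finset.sum_sub_distrib]
      simp only [Finset.sum_const, Finset.card_univ, Fintype.card_fin, nsmul_eq_mul, mul_one]
      ring
    -- subadditivity over the sum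
    have hsubsum : ∀ s : Finset (Fin d), f (∑ i ∈ s, xs i) ≤ ∑ i ∈ s, f (xs i) := by
      intro s
      induction s using Finset.cons_induction with
      | empty => simp [hf0]
      | cons i s hi ih =>
        rw [Finset.sum_cons, Finset.sum_cons]
        have h1 := hsubadd (xs i) (∑ j ∈ s, xs j) (hxs0 i)
          (Finset.sum_nonneg (fun j _ => hxs0 j))
        have h2 : f (xs i + ∑ j ∈ s, xs j) ≤ f (xs i) + f (∑ j ∈ s, xs j) := h1
        linarith [ih]
    have hft : f t ≤ ∑ i, f (xs i) := hsubsum Finset.univ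
    have hmain : max ((∑ i, u i ^ c) - d + 1) 0 ≤ ψ t ^ c := by
      apply max_le
      · rw [hsum_eq]
        have h1 : f t = 1 - ψ t ^ c := by simp only [hfdef]
        linarith [hft]
      · exact Real.rpow_nonneg hψt0 c
    calc max ((∑ i, u i ^ c) - d + 1) 0 ^ (d - 1)
        ≤ (ψ t ^ c) ^ (d - 1) := pow_le_pow_left₀ (le_max_right _ 0) hmain (d - 1)
      _ = ψ t := by
          rw [← Real.rpow_natCast (ψ t ^ c) (d - 1), ← Real.rpow_mul hψt0]
          have h8 : c * ((d - 1 : ℕ) : ℝ) = 1 := by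
            have h9 : ((d - 1 : ℕ) : ℝ) = (d:ℝ) - 1 := by
              have : (1:ℕ) ≤ d := by omega
              push_cast [Nat.cast_sub this]
              ring
            rw [h9, hcdef]
            field_simp
          rw [h8, Real.rpow_one]

end Stmt19Aux

/-- For a `d`-monotone generator `ψ` with `d ≥ 3`, the function `f(x) = 1 - ψ(x)^{1/(d-1)}`
is concave on `(0, ψ⁻¹(0)) = {x > 0 : ψ(x) > 0}`; consequently the Archimedean copula
generated by `ψ` dominates pointwise the lower bound `C_d^L` generated by
`ψ_d^L(x) = (1-x)₊^(d-1)`. -/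
theorem stmt19 (d : ℕ) (hd : 3 ≤ d) (ψ : ℝ → ℝ) (hψ : IsArchGen ψ)
    (hmon : DMonotoneOn d ψ) :
    ConcaveOn ℝ {x : ℝ | 0 < x ∧ 0 < ψ x}
      (fun x => 1 - ψ x ^ (1/((d:ℝ) - 1))) ∧
    ∀ u : Fin d → ℝ, (∀ i, u i ∈ Set.Icc (0:ℝ) 1) →
      max ((∑ i, u i ^ (1/((d:ℝ) - 1))) - d + 1) 0 ^ (d - 1)
        ≤ ψ (∑ i, psiInv ψ (u i)) := by
  have hconc := Stmt19Aux.concave_final hd hψ hmon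
  exact ⟨hconc, Stmt19Aux.part2 d hd ψ hψ hconc⟩
end
end
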